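/- arXiv:1712.05662 — 12 statements merged into one kernel-verified Lean document; each statement's English description precedes it below -/
import Mathlib

section
/- Under the standing assumptions, the sequence {‖U_i‖}_{i=1}^n is strictly increasing, i.e. ‖U_i‖ < ‖U_{i+1}‖ for i = 1,…,n−1. -/
open scoped Matrix
attribute [local instance] Matrix.linftyOpNormedRing

/-- The block tridiagonal matrix with diagonal blocks `A 1, …, A n`, superdiagonal blocks
`B 1, …, B (n-1)` and subdiagonal blocks `C 1, …, C (n-1)`. -/
noncomputable def blockTridiag (n m : ℕ) (A B C : ℕ → Matrix (Fin m) (Fin m) ℂ) :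
    Matrix (Fin n × Fin m) (Fin n × Fin m) ℂ :=
  Matrix.of fun p q =>
    if p.1 = q.1 then A ((p.1 : ℕ) + 1) p.2 q.2
    else if (p.1 : ℕ) + 1 = (q.1 : ℕ) then B ((p.1 : ℕ) + 1) p.2 q.2
    else if (q.1 : ℕ) + 1 = (p.1 : ℕ) then C ((q.1 : ℕ) + 1) p.2 q.2
    else 0

theorem norm_U_strict_mono
    (n m : ℕ) (hn : 2 ≤ n) (hm : 1 ≤ m)
    (A B C : ℕ → Matrix (Fin m) (Fin m) ℂ)
    (hC0 : C 0 = 0) (hBn : B n = 0)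
    (hAinv : IsUnit (blockTridiag n m A B C))
    (hB : ∀ i, 1 ≤ i → i ≤ n - 1 → IsUnit (B i))
    (hC : ∀ i, 1 ≤ i → i ≤ n - 1 → IsUnit (C i))
    (hAi : ∀ i, 1 ≤ i → i ≤ n → IsUnit (A i))
    (hdom : ∀ i, 1 ≤ i → i ≤ n → ‖(A i)⁻¹ * C (i - 1)‖ + ‖(A i)⁻¹ * B i‖ ≤ 1)
    (hB1 : ‖(A 1)⁻¹ * B 1‖ < 1)
    (hCn : ‖(A n)⁻¹ * C (n - 1)‖ < 1)
    (U : ℕ → Matrix (Fin m) (Fin m) ℂ)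
    (hU1 : U 1 = 1) (hU2 : U 2 = -((B 1)⁻¹ * A 1))
    (hU : ∀ i, 3 ≤ i → i ≤ n →
      U i = -((B (i - 1))⁻¹ * (C (i - 2) * U (i - 2) + A (i - 1) * U (i - 1)))) :
    ∀ i, 1 ≤ i → i ≤ n - 1 → ‖U i‖ < ‖U (i + 1)‖ := by
  haveI : Nonempty (Fin m) := Fin.pos_iff_nonempty.mp hm
  -- base case
  have base : ‖U 1‖ < ‖U 2‖ := by
    have hB1u : IsUnit (B 1) := hB 1 le_rfl (by omega)
    have hA1u : IsUnit (A 1) := hAi 1 le_rfl (by omega)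
    have h1 : (1 : Matrix (Fin m) (Fin m) ℂ) = -((A 1)⁻¹ * B 1 * U 2) := by
      rw [hU2]
      rw [Matrix.mul_neg, Matrix.mul_assoc, ← Matrix.mul_assoc (B 1),
        Matrix.mul_nonsing_inv _ (Matrix.isUnit_iff_isUnit_det _ |>.mp hB1u),
        Matrix.one_mul, Matrix.nonsing_inv_mul _ (Matrix.isUnit_iff_isUnit_det _ |>.mp hA1u),
        neg_neg]
    have h2 : (1:ℝ) ≤ ‖(A 1)⁻¹ * B 1‖ * ‖U 2‖ := by
      calc (1:ℝ) = ‖(1 : Matrix (Fin m) (Fin m) ℂ)‖ := norm_one.symm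
        _ = ‖(A 1)⁻¹ * B 1 * U 2‖ := by rw [h1, norm_neg]
        _ ≤ ‖(A 1)⁻¹ * B 1‖ * ‖U 2‖ := norm_mul_le _ _
    have hU2pos : 0 < ‖U 2‖ := by
      by_contra h
      push_neg at h
      nlinarith [norm_nonneg ((A 1)⁻¹ * B 1)]
    rw [hU1, norm_one]
    nlinarith [norm_nonneg ((A 1)⁻¹ * B 1)]
  intro i hi1 hin
  induction i with
  | zero => omega
  | succ k ih =>
    rcases Nat.eq_or_lt_of_le hi1 with h1 | h1
    · rw [← h1]; exact base
    -- now k + 1 ≥ 2, set i := k + 1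
    have hk1 : 1 ≤ k := by omega
    have ihk : ‖U k‖ < ‖U (k + 1)‖ := ih hk1 (by omega)
    set i := k + 1 with hidef
    have hBu : IsUnit (B i) := hB i (by omega) (by omega)
    have hCu : IsUnit (C (i - 1)) := hC (i - 1) (by omega) (by omega)
    have hAu : IsUnit (A i) := hAi i (by omega) (by omega)
    -- recurrence for U (i+1)
    have hrec := hU (i + 1) (by omega) (by omega)
    simp only [show i + 1 - 1 = i from rfl, show i + 1 - 2 = i - 1 by omega] at hrec
    have hkey : U i = -((A i)⁻¹ * C (i - 1) * U (i - 1)) - (A i)⁻¹ * B i * U (i + 1) := by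
      have hBinv : B i * (B i)⁻¹ = 1 := Matrix.mul_nonsing_inv _
        (Matrix.isUnit_iff_isUnit_det _ |>.mp hBu)
      have hAinv' : (A i)⁻¹ * A i = 1 := Matrix.nonsing_inv_mul _
        (Matrix.isUnit_iff_isUnit_det _ |>.mp hAu)
      have h3 : B i * U (i + 1) = -(C (i - 1) * U (i - 1) + A i * U i) := by
        rw [hrec, Matrix.mul_neg, ← Matrix.mul_assoc, hBinv, Matrix.one_mul]
      have h4 : A i * U i = -(C (i - 1) * U (i - 1)) - B i * U (i + 1) := by
        rw [h3]; abel
      calc U i = (A i)⁻¹ * (A i * U i) := by rw [← Matrix.mul_assoc, hAinv', Matrix.one_mul]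
        _ = -((A i)⁻¹ * C (i - 1) * U (i - 1)) - (A i)⁻¹ * B i * U (i + 1) := by
            rw [h4]; noncomm_ring
    set a := ‖(A i)⁻¹ * C (i - 1)‖ with ha
    set b := ‖(A i)⁻¹ * B i‖ with hb
    have hnorm : ‖U i‖ ≤ a * ‖U (i - 1)‖ + b * ‖U (i + 1)‖ := by
      calc ‖U i‖ ≤ ‖(A i)⁻¹ * C (i - 1) * U (i - 1)‖ + ‖(A i)⁻¹ * B i * U (i + 1)‖ := by
            rw [hkey]
            exact (norm_sub_le _ _).trans (by rw [norm_neg])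
        _ ≤ a * ‖U (i - 1)‖ + b * ‖U (i + 1)‖ :=
            add_le_add (norm_mul_le _ _) (norm_mul_le _ _)
    have hapos : 0 < a := by
      rw [ha, norm_pos_iff]
      intro hz
      have : IsUnit ((A i)⁻¹ * C (i - 1)) :=
        (Matrix.isUnit_nonsing_inv_iff.mpr hAu).mul hCu
      rw [hz] at this
      exact not_isUnit_zero this
    have hab : a + b ≤ 1 := hdom i (by omega) (by omega)
    have hUim1 : U (i - 1) = U k := by simp [hidef]
    rw [hUim1] at hnorm
    by_contra hcon
    push_neg at hcon
    nlinarith [norm_nonneg ((A i)⁻¹ * B i), norm_nonneg (U (i+1)), norm_nonneg (U i)]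
end

section
/- Under the standing assumptions, and assuming X_nA_n + X_{n−1}B_{n−1} is invertible so that the Y_i are defined, the sequence {‖Y_i‖}_{i=1}^n is strictly decreasing, i.e. ‖Y_{i+1}‖ < ‖Y_i‖ for i = 1,…,n−1. -/
open scoped Matrix
attribute [local instance] Matrix.linftyOpNormedRing

theorem norm_Y_strict_anti
    (n m : ℕ) (hn : 2 ≤ n) (hm : 1 ≤ m)
    (A B C : ℕ → Matrix (Fin m) (Fin m) ℂ)
    (hC0 : C 0 = 0) (hBn : B n = 0)
    (hAinv : IsUnit (blockTridiag n m A B C))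
    (hB : ∀ i, 1 ≤ i → i ≤ n - 1 → IsUnit (B i))
    (hC : ∀ i, 1 ≤ i → i ≤ n - 1 → IsUnit (C i))
    (hAi : ∀ i, 1 ≤ i → i ≤ n → IsUnit (A i))
    (hdom : ∀ i, 1 ≤ i → i ≤ n → ‖(A i)⁻¹ * C (i - 1)‖ + ‖(A i)⁻¹ * B i‖ ≤ 1)
    (hB1 : ‖(A 1)⁻¹ * B 1‖ < 1)
    (hCn : ‖(A n)⁻¹ * C (n - 1)‖ < 1)
    (X : ℕ → Matrix (Fin m) (Fin m) ℂ)
    (hX1 : X 1 = 1) (hX2 : X 2 = -(A 1 * (C 1)⁻¹))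
    (hX : ∀ i, 3 ≤ i → i ≤ n →
      X i = -((X (i - 2) * B (i - 2) + X (i - 1) * A (i - 1)) * (C (i - 1))⁻¹))
    (hYunit : IsUnit (X n * A n + X (n - 1) * B (n - 1)))
    (Y : ℕ → Matrix (Fin m) (Fin m) ℂ)
    (hYn : Y n = (X n * A n + X (n - 1) * B (n - 1))⁻¹)
    (hYn1 : Y (n - 1) = -((C (n - 1))⁻¹ * A n * Y n))
    (hY : ∀ i, 1 ≤ i → i ≤ n - 2 →
      Y i = -((C i)⁻¹ * (A (i + 1) * Y (i + 1) + B (i + 1) * Y (i + 2)))) :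
    ∀ i, 1 ≤ i → i ≤ n - 1 → ‖Y (i + 1)‖ < ‖Y i‖ := by
  haveI : Nonempty (Fin m) := ⟨⟨0, hm⟩⟩
  -- base case: i = n - 1
  have hbase : ‖Y n‖ < ‖Y (n - 1)‖ := by
    have hAn : IsUnit (A n) := hAi n (by omega) le_rfl
    have hCn1 : IsUnit (C (n - 1)) := hC (n - 1) (by omega) le_rfl
    have hCY : C (n - 1) * Y (n - 1) = -(A n * Y n) := by
      rw [hYn1, mul_neg, ← mul_assoc, ← mul_assoc,
        Matrix.mul_nonsing_inv _ ((Matrix.isUnit_iff_isUnit_det _).1 hCn1), one_mul]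
    have hYe : Y n = -((A n)⁻¹ * C (n - 1) * Y (n - 1)) := by
      have : (A n)⁻¹ * (A n * Y n) = Y n := by
        rw [← mul_assoc, Matrix.nonsing_inv_mul _ ((Matrix.isUnit_iff_isUnit_det _).1 hAn),
          one_mul]
      rw [← this, ← neg_neg (A n * Y n), ← hCY, mul_neg, mul_assoc]
    have hYnunit : IsUnit (Y n) := by
      rw [hYn]
      exact Matrix.isUnit_nonsing_inv_iff.2 hYunit
    have hYn1ne : Y (n - 1) ≠ 0 := by
      intro h0
      exact hYnunit.ne_zero (by rw [hYe, h0, mul_zero, neg_zero])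
    have hle : ‖Y n‖ ≤ ‖(A n)⁻¹ * C (n - 1)‖ * ‖Y (n - 1)‖ := by
      rw [hYe, norm_neg]
      exact norm_mul_le _ _
    have hpos : 0 < ‖Y (n - 1)‖ := norm_pos_iff.2 hYn1ne
    calc ‖Y n‖ ≤ ‖(A n)⁻¹ * C (n - 1)‖ * ‖Y (n - 1)‖ := hle
      _ < 1 * ‖Y (n - 1)‖ := by exact mul_lt_mul_of_pos_right hCn hpos
      _ = ‖Y (n - 1)‖ := one_mul _
  suffices H : ∀ k i, 1 ≤ i → i + k = n - 1 → ‖Y (i + 1)‖ < ‖Y i‖ by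
    intro i h1 h2
    exact H (n - 1 - i) i h1 (by omega)
  intro k
  induction k with
  | zero =>
    intro i h1 hik
    have hi : i = n - 1 := by omega
    have h1' : i + 1 = n := by omega
    subst hi
    rw [show n - 1 + 1 = n from by omega]
    exact hbase
  | succ k ih =>
    intro i h1 hik
    have hih : ‖Y (i + 1 + 1)‖ < ‖Y (i + 1)‖ := ih (i + 1) (by omega) (by omega)
    have hCi : IsUnit (C i) := hC i h1 (by omega)
    have hA1 : IsUnit (A (i + 1)) := hAi (i + 1) (by omega) (by omega)
    have hBi : IsUnit (B (i + 1)) := hB (i + 1) (by omega) (by omega)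
    have hrec := hY i h1 (by omega)
    have hCY : C i * Y i = -(A (i + 1) * Y (i + 1) + B (i + 1) * Y (i + 2)) := by
      rw [hrec, mul_neg, ← mul_assoc,
        Matrix.mul_nonsing_inv _ ((Matrix.isUnit_iff_isUnit_det _).1 hCi), one_mul]
    have hAY : A (i + 1) * Y (i + 1) = -(C i * Y i) - B (i + 1) * Y (i + 2) := by
      rw [hCY, neg_neg, add_sub_cancel_right]
    have hYe : Y (i + 1) =
        -((A (i + 1))⁻¹ * C i * Y i + (A (i + 1))⁻¹ * B (i + 1) * Y (i + 2)) := by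
      have hinv : (A (i + 1))⁻¹ * (A (i + 1) * Y (i + 1)) = Y (i + 1) := by
        rw [← mul_assoc, Matrix.nonsing_inv_mul _ ((Matrix.isUnit_iff_isUnit_det _).1 hA1),
          one_mul]
      rw [← hinv, hAY]
      noncomm_ring
    set α := ‖(A (i + 1))⁻¹ * C i‖ with hαdef
    set β := ‖(A (i + 1))⁻¹ * B (i + 1)‖ with hβdef
    have hkey : ‖Y (i + 1)‖ ≤ α * ‖Y i‖ + β * ‖Y (i + 2)‖ := by
      rw [hYe, norm_neg]
      calc ‖(A (i + 1))⁻¹ * C i * Y i + (A (i + 1))⁻¹ * B (i + 1) * Y (i + 2)‖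
          ≤ ‖(A (i + 1))⁻¹ * C i * Y i‖ + ‖(A (i + 1))⁻¹ * B (i + 1) * Y (i + 2)‖ :=
            norm_add_le _ _
        _ ≤ α * ‖Y i‖ + β * ‖Y (i + 2)‖ :=
            add_le_add (norm_mul_le _ _) (norm_mul_le _ _)
    have hαβ : α + β ≤ 1 := by
      have := hdom (i + 1) (by omega) (by omega)
      simpa [Nat.add_sub_cancel] using this
    have hα : 0 < α := by
      rw [hαdef, norm_pos_iff]
      intro h0
      apply hCi.ne_zero
      have : C i = A (i + 1) * ((A (i + 1))⁻¹ * C i) := by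
        rw [← mul_assoc, Matrix.mul_nonsing_inv _ ((Matrix.isUnit_iff_isUnit_det _).1 hA1),
          one_mul]
      rw [this, h0, mul_zero]
    have hβ : 0 < β := by
      rw [hβdef, norm_pos_iff]
      intro h0
      apply hBi.ne_zero
      have : B (i + 1) = A (i + 1) * ((A (i + 1))⁻¹ * B (i + 1)) := by
        rw [← mul_assoc, Matrix.mul_nonsing_inv _ ((Matrix.isUnit_iff_isUnit_det _).1 hA1),
          one_mul]
      rw [this, h0, mul_zero]
    have hu : (0:ℝ) ≤ ‖Y i‖ := norm_nonneg _
    have h12 : (i + 1 + 1) = i + 2 := by omega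
    rw [h12] at hih
    nlinarith [hih, hkey, mul_lt_mul_of_pos_left hih hβ]
end

section
/- Under the standing assumptions, the recursively defined matrices L_1 = T_1 = A_1⁻¹B_1, T_i = I − A_i⁻¹C_{i−1}L_{i−1} and L_i = T_i⁻¹A_i⁻¹B_i (for i = 2,…,n−1) are all invertible (in particular each T_i is invertible, so the recursion is well defined), and ‖L_i‖ ≤ τ_i for i = 1,…,n−1. -/
open scoped Matrix
attribute [local instance] Matrix.linftyOpNormedRing

attribute [local instance] Matrix.linftyOpNormedAlgebra
set_option maxHeartbeats 1000000

private lemma oneSub_aux (m : ℕ) (hm : 1 ≤ m) (X : Matrix (Fin m) (Fin m) ℂ) (h : ‖X‖ < 1) :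
    IsUnit (1 - X) ∧ ‖(1 - X)⁻¹‖ ≤ (1 - ‖X‖)⁻¹ := by
  haveI : Nonempty (Fin m) := ⟨⟨0, hm⟩⟩
  haveI : CompleteSpace (Matrix (Fin m) (Fin m) ℂ) := FiniteDimensional.complete ℂ _
  refine ⟨isUnit_one_sub_of_norm_lt_one h, ?_⟩
  rw [Matrix.nonsing_inv_eq_ringInverse, ← geom_series_eq_inverse X h]
  have := tsum_geometric_le_of_norm_lt_one X h
  simpa [norm_one] using this

theorem L_T_invertible_and_norm_le_tau
    (n m : ℕ) (hn : 2 ≤ n) (hm : 1 ≤ m)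
    (A B C : ℕ → Matrix (Fin m) (Fin m) ℂ)
    (hC0 : C 0 = 0) (hBn : B n = 0)
    (hAinv : IsUnit (blockTridiag n m A B C))
    (hB : ∀ i, 1 ≤ i → i ≤ n - 1 → IsUnit (B i))
    (hC : ∀ i, 1 ≤ i → i ≤ n - 1 → IsUnit (C i))
    (hAi : ∀ i, 1 ≤ i → i ≤ n → IsUnit (A i))
    (hdom : ∀ i, 1 ≤ i → i ≤ n → ‖(A i)⁻¹ * C (i - 1)‖ + ‖(A i)⁻¹ * B i‖ ≤ 1)
    (hB1 : ‖(A 1)⁻¹ * B 1‖ < 1)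
    (hCn : ‖(A n)⁻¹ * C (n - 1)‖ < 1)
    (τ : ℕ → ℝ)
    (hτ : ∀ i, 1 ≤ i → i ≤ n → τ i = ‖(A i)⁻¹ * B i‖ / (1 - ‖(A i)⁻¹ * C (i - 1)‖))
    (L T : ℕ → Matrix (Fin m) (Fin m) ℂ)
    (hL1 : L 1 = (A 1)⁻¹ * B 1) (hT1 : T 1 = (A 1)⁻¹ * B 1)
    (hT : ∀ i, 2 ≤ i → i ≤ n - 1 → T i = 1 - (A i)⁻¹ * C (i - 1) * L (i - 1))
    (hL : ∀ i, 2 ≤ i → i ≤ n - 1 → L i = (T i)⁻¹ * ((A i)⁻¹ * B i)) :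
    (∀ i, 1 ≤ i → i ≤ n - 1 → IsUnit (T i) ∧ IsUnit (L i)) ∧
    (∀ i, 1 ≤ i → i ≤ n - 1 → ‖L i‖ ≤ τ i) := by
  haveI : Nonempty (Fin m) := ⟨⟨0, hm⟩⟩
  -- (A i)⁻¹ * B i is a unit for 1 ≤ i ≤ n-1
  have hbu : ∀ i, 1 ≤ i → i ≤ n - 1 → IsUnit ((A i)⁻¹ * B i) := by
    intro i h1 h2
    have hA := hAi i h1 (h2.trans (Nat.sub_le n 1))
    have : IsUnit ((A i)⁻¹) :=
      (Matrix.isUnit_iff_isUnit_det _).mpr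
        (Matrix.isUnit_nonsing_inv_det _ ((Matrix.isUnit_iff_isUnit_det _).mp hA))
    exact this.mul (hB i h1 h2)
  have hcu : ∀ i, 1 ≤ i → i ≤ n - 1 → IsUnit ((A (i+1))⁻¹ * C i) := by
    intro i h1 h2
    have h2' : i + 1 ≤ n := by omega
    have hA := hAi (i+1) (by omega) h2'
    have : IsUnit ((A (i+1))⁻¹) :=
      (Matrix.isUnit_iff_isUnit_det _).mpr
        (Matrix.isUnit_nonsing_inv_det _ ((Matrix.isUnit_iff_isUnit_det _).mp hA))
    exact this.mul (hC i h1 h2)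
  have hbpos : ∀ i, 1 ≤ i → i ≤ n - 1 → 0 < ‖(A i)⁻¹ * B i‖ := by
    intro i h1 h2
    exact norm_pos_iff.mpr ((hbu i h1 h2).ne_zero)
  -- strengthened induction
  have key : ∀ i, 1 ≤ i → i ≤ n - 1 →
      (IsUnit (T i) ∧ IsUnit (L i)) ∧ (‖L i‖ ≤ τ i ∧ ‖L i‖ < 1) := by
    intro i h1
    induction i, h1 using Nat.le_induction with
    | base =>
      intro h2
      have hτ1 : τ 1 = ‖(A 1)⁻¹ * B 1‖ := by
        rw [hτ 1 le_rfl (by omega)]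
        simp [hC0]
      refine ⟨⟨?_, ?_⟩, ?_, ?_⟩
      · rw [hT1]; exact hbu 1 le_rfl h2
      · rw [hL1]; exact hbu 1 le_rfl h2
      · rw [hL1, hτ1]
      · rw [hL1]; exact hB1
    | succ i hi ih =>
      intro h2
      have h2i : i ≤ n - 1 := by omega
      obtain ⟨⟨hTu, hLu⟩, hLτ, hL1'⟩ := ih h2i
      set c := (A (i+1))⁻¹ * C i with hc
      set b := (A (i+1))⁻¹ * B (i+1) with hb
      set X := c * L i with hX
      have hTi : T (i+1) = 1 - X := by
        have := hT (i+1) (by omega) h2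
        simpa using this
      have hdomi := hdom (i+1) (by omega) (by omega)
      have hdomi' : ‖c‖ + ‖b‖ ≤ 1 := by simpa using hdomi
      have hcpos : 0 < ‖c‖ := norm_pos_iff.mpr ((hcu i hi h2i).ne_zero)
      have hbpos' : 0 < ‖b‖ := hbpos (i+1) (by omega) h2
      have hXc : ‖X‖ < ‖c‖ := by
        calc ‖X‖ ≤ ‖c‖ * ‖L i‖ := norm_mul_le _ _
        _ < ‖c‖ * 1 := by exact mul_lt_mul_of_pos_left hL1' hcpos
        _ = ‖c‖ := mul_one _
      have hc1 : ‖c‖ ≤ 1 := by linarith [norm_nonneg b]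
      have hX1 : ‖X‖ < 1 := lt_of_lt_of_le hXc hc1
      obtain ⟨hTunit, hTinv⟩ := oneSub_aux m hm X hX1
      rw [← hTi] at hTunit hTinv
      have hLi : L (i+1) = (T (i+1))⁻¹ * b := hL (i+1) (by omega) h2
      have hLb : ‖L (i+1)‖ ≤ (1 - ‖X‖)⁻¹ * ‖b‖ := by
        rw [hLi]
        calc ‖(T (i+1))⁻¹ * b‖ ≤ ‖(T (i+1))⁻¹‖ * ‖b‖ := norm_mul_le _ _
        _ ≤ (1 - ‖X‖)⁻¹ * ‖b‖ := by
            exact mul_le_mul_of_nonneg_right hTinv (norm_nonneg b)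
      have hden : (0:ℝ) < 1 - ‖c‖ := by linarith
      have hdenX : (0:ℝ) < 1 - ‖X‖ := by linarith
      have hτi : τ (i+1) = ‖b‖ / (1 - ‖c‖) := by
        have := hτ (i+1) (by omega) (by omega)
        simpa using this
      refine ⟨⟨hTunit, ?_⟩, ?_, ?_⟩
      · rw [hLi]
        have : IsUnit ((T (i+1))⁻¹) :=
          (Matrix.isUnit_iff_isUnit_det _).mpr
            (Matrix.isUnit_nonsing_inv_det _ ((Matrix.isUnit_iff_isUnit_det _).mp hTunit))
        exact this.mul (hbu (i+1) (by omega) h2)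
      · rw [hτi]
        refine hLb.trans ?_
        rw [inv_mul_eq_div]
        gcongr
      · refine lt_of_le_of_lt hLb ?_
        rw [inv_mul_eq_div, div_lt_one hdenX]
        linarith
  constructor
  · intro i h1 h2; exact (key i h1 h2).1
  · intro i h1 h2; exact (key i h1 h2).2.1
end

section
/- Under the standing assumptions, the recursively defined matrices M_n = W_n = A_n⁻¹C_{n−1}, W_i = I − A_i⁻¹B_iM_{i+1} and M_i = W_i⁻¹A_i⁻¹C_{i−1} (for i = n−1,…,2) are all invertible (in particular each W_i is invertible, so the recursion is well defined), and ‖M_i‖ ≤ ω_i for i = 2,…,n. -/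
open scoped Matrix
attribute [local instance] Matrix.linftyOpNormedRing

private lemma neumann_aux {m : ℕ} [Nonempty (Fin m)] (X : Matrix (Fin m) (Fin m) ℂ)
    (h : ‖X‖ < 1) : IsUnit (1 - X) ∧ ‖(1 - X)⁻¹‖ ≤ (1 - ‖X‖)⁻¹ := by
  have : @CompleteSpace (Matrix (Fin m) (Fin m) ℂ) (PseudoMetricSpace.toUniformSpace) := by
    have : CompleteSpace (Matrix (Fin m) (Fin m) ℂ) := inferInstance
    exact this
  have hu : IsUnit (1 - X) := (Units.oneSub X h).isUnit
  have hd : IsUnit (1 - X).det := (Matrix.isUnit_iff_isUnit_det _).mp hu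
  have key : (1 - X) * (1 - X)⁻¹ = 1 := Matrix.mul_nonsing_inv _ hd
  set Y := (1 - X)⁻¹ with hYdef
  have hY : Y = 1 + X * Y := by
    have h1 : Y - X * Y = 1 := by rw [← key, sub_mul, one_mul]
    exact sub_eq_iff_eq_add.mp h1
  have hnorm : ‖Y‖ ≤ 1 + ‖X‖ * ‖Y‖ := by
    calc ‖Y‖ = ‖1 + X * Y‖ := by rw [← hY]
      _ ≤ ‖(1 : Matrix (Fin m) (Fin m) ℂ)‖ + ‖X * Y‖ := norm_add_le _ _
      _ ≤ 1 + ‖X‖ * ‖Y‖ := by rw [norm_one]; exact add_le_add_right (norm_mul_le _ _) 1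
  have hpos : 0 < 1 - ‖X‖ := by linarith
  refine ⟨hu, ?_⟩
  rw [← one_div, le_div_iff₀ hpos]
  nlinarith [norm_nonneg Y]
theorem M_W_invertible_and_norm_le_omega
    (n m : ℕ) (hn : 2 ≤ n) (hm : 1 ≤ m)
    (A B C : ℕ → Matrix (Fin m) (Fin m) ℂ)
    (hC0 : C 0 = 0) (hBn : B n = 0)
    (hAinv : IsUnit (blockTridiag n m A B C))
    (hB : ∀ i, 1 ≤ i → i ≤ n - 1 → IsUnit (B i))
    (hC : ∀ i, 1 ≤ i → i ≤ n - 1 → IsUnit (C i))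
    (hAi : ∀ i, 1 ≤ i → i ≤ n → IsUnit (A i))
    (hdom : ∀ i, 1 ≤ i → i ≤ n → ‖(A i)⁻¹ * C (i - 1)‖ + ‖(A i)⁻¹ * B i‖ ≤ 1)
    (hB1 : ‖(A 1)⁻¹ * B 1‖ < 1)
    (hCn : ‖(A n)⁻¹ * C (n - 1)‖ < 1)
    (ω : ℕ → ℝ)
    (hω : ∀ i, 1 ≤ i → i ≤ n → ω i = ‖(A i)⁻¹ * C (i - 1)‖ / (1 - ‖(A i)⁻¹ * B i‖))
    (M W : ℕ → Matrix (Fin m) (Fin m) ℂ)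
    (hMn : M n = (A n)⁻¹ * C (n - 1)) (hWn : W n = (A n)⁻¹ * C (n - 1))
    (hW : ∀ i, 2 ≤ i → i ≤ n - 1 → W i = 1 - (A i)⁻¹ * B i * M (i + 1))
    (hM : ∀ i, 2 ≤ i → i ≤ n - 1 → M i = (W i)⁻¹ * ((A i)⁻¹ * C (i - 1))) :
    (∀ i, 2 ≤ i → i ≤ n → IsUnit (W i) ∧ IsUnit (M i)) ∧
    (∀ i, 2 ≤ i → i ≤ n → ‖M i‖ ≤ ω i) := by
  haveI : Nonempty (Fin m) := ⟨⟨0, hm⟩⟩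
  -- basic facts
  have hXunit : ∀ i, 2 ≤ i → i ≤ n → IsUnit ((A i)⁻¹ * C (i - 1)) := by
    intro i h2 hle
    exact (Matrix.isUnit_nonsing_inv_iff.mpr (hAi i (by omega) hle)).mul
      (hC (i - 1) (by omega) (by omega))
  have hXpos : ∀ i, 2 ≤ i → i ≤ n → 0 < ‖(A i)⁻¹ * C (i - 1)‖ :=
    fun i h2 hle => norm_pos_iff.mpr (hXunit i h2 hle).ne_zero
  have hBlt : ∀ i, 2 ≤ i → i ≤ n → ‖(A i)⁻¹ * B i‖ < 1 := by
    intro i h2 hle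
    have := hdom i (by omega) hle
    have := hXpos i h2 hle
    linarith
  have hBn0 : ‖(A n)⁻¹ * B n‖ = 0 := by rw [hBn, mul_zero, norm_zero]
  have hωn : ω n = ‖(A n)⁻¹ * C (n - 1)‖ := by
    rw [hω n (by omega) le_rfl, hBn0, sub_zero, div_one]
  -- main downward induction
  have key : ∀ k i, 2 ≤ i → i ≤ n → n ≤ i + k →
      IsUnit (W i) ∧ IsUnit (M i) ∧ ‖M i‖ ≤ ω i ∧ ω i ≤ 1 := by
    intro k
    induction k with
    | zero =>
      intro i h2 hle hk
      have hi : i = n := by omega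
      subst hi
      refine ⟨hWn ▸ hXunit i h2 hle, hMn ▸ hXunit i h2 hle, ?_, ?_⟩
      · rw [hMn, hωn]
      · rw [hωn]; exact le_of_lt hCn
    | succ k ih =>
      intro i h2 hle hk
      by_cases hi : i = n
      · subst hi
        refine ⟨hWn ▸ hXunit i h2 hle, hMn ▸ hXunit i h2 hle, ?_, ?_⟩
        · rw [hMn, hωn]
        · rw [hωn]; exact le_of_lt hCn
      · have hle' : i ≤ n - 1 := by omega
        obtain ⟨_, _, hMb, hωb⟩ := ih (i + 1) (by omega) (by omega) (by omega)
        have hABlt : ‖(A i)⁻¹ * B i‖ < 1 := hBlt i h2 hle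
        have hM1 : ‖M (i + 1)‖ ≤ 1 := hMb.trans hωb
        have hXle : ‖(A i)⁻¹ * B i * M (i + 1)‖ ≤ ‖(A i)⁻¹ * B i‖ := by
          calc ‖(A i)⁻¹ * B i * M (i + 1)‖ ≤ ‖(A i)⁻¹ * B i‖ * ‖M (i + 1)‖ :=
                norm_mul_le _ _
            _ ≤ ‖(A i)⁻¹ * B i‖ * 1 :=
                mul_le_mul_of_nonneg_left hM1 (norm_nonneg _)
            _ = ‖(A i)⁻¹ * B i‖ := mul_one _
        have hXlt : ‖(A i)⁻¹ * B i * M (i + 1)‖ < 1 := lt_of_le_of_lt hXle hABlt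
        obtain ⟨hWu', hWnorm⟩ := neumann_aux _ hXlt
        have hWi := hW i h2 hle'
        have hWu : IsUnit (W i) := hWi ▸ hWu'
        have hMi := hM i h2 hle'
        have hMu : IsUnit (M i) :=
          hMi ▸ (Matrix.isUnit_nonsing_inv_iff.mpr hWu).mul (hXunit i h2 hle)
        have hdpos : 0 < 1 - ‖(A i)⁻¹ * B i‖ := by linarith
        have hinvle : ‖(W i)⁻¹‖ ≤ (1 - ‖(A i)⁻¹ * B i‖)⁻¹ := by
          rw [hWi]
          refine hWnorm.trans ?_
          exact inv_anti₀ hdpos (by linarith)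
        have hωi : ω i = ‖(A i)⁻¹ * C (i - 1)‖ / (1 - ‖(A i)⁻¹ * B i‖) :=
          hω i (by omega) hle
        have hMnorm : ‖M i‖ ≤ ω i := by
          rw [hMi, hωi, div_eq_inv_mul]
          calc ‖(W i)⁻¹ * ((A i)⁻¹ * C (i - 1))‖
              ≤ ‖(W i)⁻¹‖ * ‖(A i)⁻¹ * C (i - 1)‖ := norm_mul_le _ _
            _ ≤ (1 - ‖(A i)⁻¹ * B i‖)⁻¹ * ‖(A i)⁻¹ * C (i - 1)‖ :=
                mul_le_mul_of_nonneg_right hinvle (norm_nonneg _)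
        have hωle : ω i ≤ 1 := by
          rw [hωi, div_le_one hdpos]
          have := hdom i (by omega) hle
          linarith
        exact ⟨hWu, hMu, hMnorm, hωle⟩
  constructor
  · intro i h2 hle
    obtain ⟨h1, h2', _, _⟩ := key n i h2 hle (by omega)
    exact ⟨h1, h2'⟩
  · intro i h2 hle
    obtain ⟨_, _, h3, _⟩ := key n i h2 hle (by omega)
    exact h3
end

section
/- Under the standing assumptions, the matrices U_i satisfy U_i = −L_iU_{i+1} for i = 1,…,n−1, where L_i are the matrices defined by the recursion L_1 = T_1 = A_1⁻¹B_1, T_i = I − A_i⁻¹C_{i−1}L_{i−1}, L_i = T_i⁻¹A_i⁻¹B_i for i = 2,…,n−1. -/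
open scoped Matrix
attribute [local instance] Matrix.linftyOpNormedRing

theorem U_recurrence_via_L
    (n m : ℕ) (hn : 2 ≤ n) (hm : 1 ≤ m)
    (A B C : ℕ → Matrix (Fin m) (Fin m) ℂ)
    (hC0 : C 0 = 0) (hBn : B n = 0)
    (hAinv : IsUnit (blockTridiag n m A B C))
    (hB : ∀ i, 1 ≤ i → i ≤ n - 1 → IsUnit (B i))
    (hC : ∀ i, 1 ≤ i → i ≤ n - 1 → IsUnit (C i))
    (hAi : ∀ i, 1 ≤ i → i ≤ n → IsUnit (A i))
    (hdom : ∀ i, 1 ≤ i → i ≤ n → ‖(A i)⁻¹ * C (i - 1)‖ + ‖(A i)⁻¹ * B i‖ ≤ 1)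
    (hB1 : ‖(A 1)⁻¹ * B 1‖ < 1)
    (hCn : ‖(A n)⁻¹ * C (n - 1)‖ < 1)
    (U : ℕ → Matrix (Fin m) (Fin m) ℂ)
    (hU1 : U 1 = 1) (hU2 : U 2 = -((B 1)⁻¹ * A 1))
    (hU : ∀ i, 3 ≤ i → i ≤ n →
      U i = -((B (i - 1))⁻¹ * (C (i - 2) * U (i - 2) + A (i - 1) * U (i - 1))))
    (L T : ℕ → Matrix (Fin m) (Fin m) ℂ)
    (hL1 : L 1 = (A 1)⁻¹ * B 1) (hT1 : T 1 = (A 1)⁻¹ * B 1)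
    (hT : ∀ i, 2 ≤ i → i ≤ n - 1 → T i = 1 - (A i)⁻¹ * C (i - 1) * L (i - 1))
    (hL : ∀ i, 2 ≤ i → i ≤ n - 1 → L i = (T i)⁻¹ * ((A i)⁻¹ * B i)) :
    ∀ i, 1 ≤ i → i ≤ n - 1 → U i = -(L i * U (i + 1)) := by
  have key : ∀ i, 1 ≤ i → i ≤ n - 1 →
      IsUnit (T i) ∧ ‖L i‖ < 1 ∧ U i = -(L i * U (i + 1)) := by
    intro i hi
    induction i, hi using Nat.le_induction with
    | base =>
      intro hle
      have hB1u : IsUnit (B 1) := hB 1 le_rfl (by omega)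
      have hA1u : IsUnit (A 1) := hAi 1 le_rfl (by omega)
      have detB1 : IsUnit (B 1).det := (Matrix.isUnit_iff_isUnit_det _).1 hB1u
      have detA1 : IsUnit (A 1).det := (Matrix.isUnit_iff_isUnit_det _).1 hA1u
      refine ⟨?_, ?_, ?_⟩
      · rw [hT1]
        exact (Matrix.isUnit_nonsing_inv_iff.2 hA1u).mul hB1u
      · rw [hL1]; exact hB1
      · rw [hU1, hU2, hL1, mul_neg, neg_neg, Matrix.mul_assoc,
          Matrix.mul_nonsing_inv_cancel_left _ _ detB1,
          Matrix.nonsing_inv_mul _ detA1]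
    | succ i hi ih =>
      intro hle
      obtain ⟨hTu, hLn, hUrec⟩ := ih (by omega)
      have hAju : IsUnit (A (i + 1)) := hAi (i + 1) (by omega) (by omega)
      have hCju : IsUnit (C i) := hC i (by omega) (by omega)
      have hBju : IsUnit (B (i + 1)) := hB (i + 1) (by omega) hle
      have detA : IsUnit (A (i + 1)).det := (Matrix.isUnit_iff_isUnit_det _).1 hAju
      have detB : IsUnit (B (i + 1)).det := (Matrix.isUnit_iff_isUnit_det _).1 hBju
      have hT' : T (i + 1) = 1 - (A (i + 1))⁻¹ * C i * L i := by
        have := hT (i + 1) (by omega) hle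
        simpa using this
      have hXC : IsUnit ((A (i + 1))⁻¹ * C i) :=
        (Matrix.isUnit_nonsing_inv_iff.2 hAju).mul hCju
      have hcpos : 0 < ‖(A (i + 1))⁻¹ * C i‖ := by
        rw [norm_pos_iff]
        haveI : Nonempty (Fin m) := ⟨⟨0, hm⟩⟩
        exact hXC.ne_zero
      have hdom' : ‖(A (i + 1))⁻¹ * C i‖ + ‖(A (i + 1))⁻¹ * B (i + 1)‖ ≤ 1 := by
        have := hdom (i + 1) (by omega) (by omega)
        simpa using this
      have hLnonneg : (0 : ℝ) ≤ ‖L i‖ := norm_nonneg _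
      have hbnonneg : (0 : ℝ) ≤ ‖(A (i + 1))⁻¹ * B (i + 1)‖ := norm_nonneg _
      have hXle : ‖(A (i + 1))⁻¹ * C i * L i‖ ≤ ‖(A (i + 1))⁻¹ * C i‖ * ‖L i‖ :=
        norm_mul_le _ _
      have hXlt : ‖(A (i + 1))⁻¹ * C i * L i‖ < 1 := by nlinarith
      have hTju : IsUnit (T (i + 1)) := by
        letI := (Matrix.linftyOpNormedSpace : NormedSpace ℂ (Matrix (Fin m) (Fin m) ℂ))
        haveI : CompleteSpace (Matrix (Fin m) (Fin m) ℂ) := FiniteDimensional.complete ℂ _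
        rw [hT']; exact isUnit_one_sub_of_norm_lt_one hXlt
      have detT : IsUnit (T (i + 1)).det := (Matrix.isUnit_iff_isUnit_det _).1 hTju
      have hLeq : T (i + 1) * L (i + 1) = (A (i + 1))⁻¹ * B (i + 1) := by
        rw [hL (i + 1) (by omega) hle, Matrix.mul_nonsing_inv_cancel_left _ _ detT]
      have hLexp : L (i + 1) = (A (i + 1))⁻¹ * B (i + 1)
          + (A (i + 1))⁻¹ * C i * L i * L (i + 1) := by
        rw [hT', sub_mul, one_mul] at hLeq
        rw [sub_eq_iff_eq_add] at hLeq
        exact hLeq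
      have hLjlt : ‖L (i + 1)‖ < 1 := by
        have h1 : ‖L (i + 1)‖ ≤ ‖(A (i + 1))⁻¹ * B (i + 1)‖
            + ‖(A (i + 1))⁻¹ * C i * L i‖ * ‖L (i + 1)‖ := by
          calc ‖L (i + 1)‖ ≤ ‖(A (i + 1))⁻¹ * B (i + 1)‖
              + ‖(A (i + 1))⁻¹ * C i * L i * L (i + 1)‖ := by
                conv_lhs => rw [hLexp]
                exact norm_add_le _ _
            _ ≤ _ := by
                have := norm_mul_le ((A (i + 1))⁻¹ * C i * L i) (L (i + 1))
                linarith
        have hLjnn : (0 : ℝ) ≤ ‖L (i + 1)‖ := norm_nonneg _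
        nlinarith
      refine ⟨hTju, hLjlt, ?_⟩
      have hU3 := hU (i + 2) (by omega) (by omega)
      simp only [show i + 2 - 1 = i + 1 by omega, show i + 2 - 2 = i by omega] at hU3
      have hAT : A (i + 1) * T (i + 1) = A (i + 1) - C i * L i := by
        rw [hT', mul_sub, mul_one, ← Matrix.mul_assoc,
          ← Matrix.mul_assoc, Matrix.mul_nonsing_inv _ detA, one_mul]
      have hsum : C i * U i + A (i + 1) * U (i + 1)
          = A (i + 1) * T (i + 1) * U (i + 1) := by
        rw [hUrec, hAT, sub_mul, Matrix.mul_assoc (C i), mul_neg]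
        abel
      have hcancel : L (i + 1) * ((B (i + 1))⁻¹ * (A (i + 1) * T (i + 1) * U (i + 1)))
          = U (i + 1) := by
        rw [hL (i + 1) (by omega) hle]
        simp only [Matrix.mul_assoc]
        rw [Matrix.mul_nonsing_inv_cancel_left _ _ detB,
          Matrix.nonsing_inv_mul_cancel_left _ _ detA,
          Matrix.nonsing_inv_mul_cancel_left _ _ detT]
      rw [hU3, hsum, mul_neg, hcancel, neg_neg]
  intro i h1 h2
  exact (key i h1 h2).2.2
end

section
/- Under the standing assumptions, and assuming X_nA_n + X_{n−1}B_{n−1} is invertible so that the Y_i are defined, the matrices Y_i satisfy Y_i = −M_iY_{i−1} for i = 2,…,n, where M_i are the matrices defined by the recursion M_n = W_n = A_n⁻¹C_{n−1}, W_i = I − A_i⁻¹B_iM_{i+1}, M_i = W_i⁻¹A_i⁻¹C_{i−1} for i = n−1,…,2. -/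
open scoped Matrix
attribute [local instance] Matrix.linftyOpNormedRing

theorem Y_recurrence_via_M
    (n m : ℕ) (hn : 2 ≤ n) (hm : 1 ≤ m)
    (A B C : ℕ → Matrix (Fin m) (Fin m) ℂ)
    (hC0 : C 0 = 0) (hBn : B n = 0)
    (hAinv : IsUnit (blockTridiag n m A B C))
    (hB : ∀ i, 1 ≤ i → i ≤ n - 1 → IsUnit (B i))
    (hC : ∀ i, 1 ≤ i → i ≤ n - 1 → IsUnit (C i))
    (hAi : ∀ i, 1 ≤ i → i ≤ n → IsUnit (A i))
    (hdom : ∀ i, 1 ≤ i → i ≤ n → ‖(A i)⁻¹ * C (i - 1)‖ + ‖(A i)⁻¹ * B i‖ ≤ 1)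
    (hB1 : ‖(A 1)⁻¹ * B 1‖ < 1)
    (hCn : ‖(A n)⁻¹ * C (n - 1)‖ < 1)
    (X : ℕ → Matrix (Fin m) (Fin m) ℂ)
    (hX1 : X 1 = 1) (hX2 : X 2 = -(A 1 * (C 1)⁻¹))
    (hX : ∀ i, 3 ≤ i → i ≤ n →
      X i = -((X (i - 2) * B (i - 2) + X (i - 1) * A (i - 1)) * (C (i - 1))⁻¹))
    (hYunit : IsUnit (X n * A n + X (n - 1) * B (n - 1)))
    (Y : ℕ → Matrix (Fin m) (Fin m) ℂ)
    (hYn : Y n = (X n * A n + X (n - 1) * B (n - 1))⁻¹)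
    (hYn1 : Y (n - 1) = -((C (n - 1))⁻¹ * A n * Y n))
    (hY : ∀ i, 1 ≤ i → i ≤ n - 2 →
      Y i = -((C i)⁻¹ * (A (i + 1) * Y (i + 1) + B (i + 1) * Y (i + 2))))
    (M W : ℕ → Matrix (Fin m) (Fin m) ℂ)
    (hMn : M n = (A n)⁻¹ * C (n - 1)) (hWn : W n = (A n)⁻¹ * C (n - 1))
    (hW : ∀ i, 2 ≤ i → i ≤ n - 1 → W i = 1 - (A i)⁻¹ * B i * M (i + 1))
    (hM : ∀ i, 2 ≤ i → i ≤ n - 1 → M i = (W i)⁻¹ * ((A i)⁻¹ * C (i - 1))) :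
    ∀ i, 2 ≤ i → i ≤ n → Y i = -(M i * Y (i - 1)) := by
  haveI : Nonempty (Fin m) := ⟨⟨0, hm⟩⟩
  have cancel : ∀ (P : Matrix (Fin m) (Fin m) ℂ), IsUnit P →
      ∀ Z : Matrix (Fin m) (Fin m) ℂ, P * (P⁻¹ * Z) = Z := fun P hP Z =>
    Matrix.mul_nonsing_inv_cancel_left P Z ((Matrix.isUnit_iff_isUnit_det P).mp hP)
  have cancel' : ∀ (P : Matrix (Fin m) (Fin m) ℂ), IsUnit P →
      ∀ Z : Matrix (Fin m) (Fin m) ℂ, P⁻¹ * (P * Z) = Z := fun P hP Z =>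
    Matrix.nonsing_inv_mul_cancel_left P Z ((Matrix.isUnit_iff_isUnit_det P).mp hP)
  have key : ∀ d i, 2 ≤ i → i ≤ n → n - i = d →
      ‖M i‖ < 1 ∧ Y i = -(M i * Y (i - 1)) := by
    intro d
    induction d with
    | zero =>
      intro i hi2 hin hd
      have hieq : i = n := by omega
      subst hieq
      have hCu := hC (i - 1) (by omega) (by omega)
      have hAu := hAi i (by omega) le_rfl
      refine ⟨by rw [hMn]; exact hCn, ?_⟩
      rw [hMn, hYn1, mul_neg, neg_neg]
      simp only [mul_assoc]
      rw [cancel _ hCu, cancel' _ hAu]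
    | succ d ih =>
      intro i hi2 hin hd
      have hi1 : i ≤ n - 1 := by omega
      obtain ⟨hq, hYrec⟩ := ih (i + 1) (by omega) (by omega) (by omega)
      have e : i + 1 - 1 = i := by omega
      rw [e] at hYrec
      have hAu := hAi i (by omega) (by omega)
      have hBu := hB i (by omega) hi1
      have hCu := hC (i - 1) (by omega) (by omega)
      have hdom' := hdom i (by omega) (by omega)
      have hb1 : ‖(A i)⁻¹ * B i‖ ≤ 1 := by
        have := norm_nonneg ((A i)⁻¹ * C (i - 1)); linarith
      have hABne : (A i)⁻¹ * B i ≠ 0 := by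
        intro h0
        have h1 : A i * ((A i)⁻¹ * B i) = 0 := by rw [h0, mul_zero]
        rw [cancel _ hAu] at h1
        exact hBu.ne_zero h1
      have hbpos : 0 < ‖(A i)⁻¹ * B i‖ := norm_pos_iff.mpr hABne
      have hT2 : ‖(A i)⁻¹ * B i * M (i + 1)‖ ≤ ‖(A i)⁻¹ * B i‖ * ‖M (i + 1)‖ :=
        norm_mul_le _ _
      have hT3 : ‖(A i)⁻¹ * B i‖ * ‖M (i + 1)‖ < ‖(A i)⁻¹ * B i‖ :=
        mul_lt_of_lt_one_right hbpos hq
      have hTlt : ‖(A i)⁻¹ * B i * M (i + 1)‖ < 1 := by linarith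
      have hWu : IsUnit (W i) := by
        letI : NormedAlgebra ℂ (Matrix (Fin m) (Fin m) ℂ) := Matrix.linftyOpNormedAlgebra
        haveI : CompleteSpace (Matrix (Fin m) (Fin m) ℂ) := FiniteDimensional.complete ℂ _
        rw [hW i hi2 hi1]; exact isUnit_one_sub_of_norm_lt_one hTlt
      have hMeq : W i * M i = (A i)⁻¹ * C (i - 1) := by
        rw [hM i hi2 hi1]; exact cancel _ hWu _
      have hMfix : M i = (A i)⁻¹ * C (i - 1) + (A i)⁻¹ * B i * M (i + 1) * M i := by
        rw [hW i hi2 hi1, sub_mul, one_mul] at hMeq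
        exact sub_eq_iff_eq_add.mp hMeq
      have hnorm : ‖M i‖ < 1 := by
        have h1 : ‖M i‖ ≤ ‖(A i)⁻¹ * C (i - 1)‖ + ‖(A i)⁻¹ * B i * M (i + 1)‖ * ‖M i‖ :=
          calc ‖M i‖ = ‖(A i)⁻¹ * C (i - 1) + (A i)⁻¹ * B i * M (i + 1) * M i‖ := by
                rw [← hMfix]
          _ ≤ ‖(A i)⁻¹ * C (i - 1)‖ + ‖(A i)⁻¹ * B i * M (i + 1) * M i‖ := norm_add_le _ _
          _ ≤ _ := add_le_add le_rfl (norm_mul_le _ _)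
        nlinarith [norm_nonneg (M i), norm_nonneg ((A i)⁻¹ * C (i - 1)),
          norm_nonneg ((A i)⁻¹ * B i * M (i + 1))]
      refine ⟨hnorm, ?_⟩
      have hYm : Y (i - 1) = -((C (i - 1))⁻¹ * (A i * Y i + B i * Y (i + 1))) := by
        have h := hY (i - 1) (by omega) (by omega)
        have e1 : i - 1 + 1 = i := by omega
        have e2 : i - 1 + 2 = i + 1 := by omega
        rw [e1, e2] at h
        exact h
      have hfac : A i * Y i + B i * Y (i + 1) = A i * (W i * Y i) := by
        rw [hYrec, hW i hi2 hi1]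
        simp only [mul_neg, sub_mul, one_mul, mul_sub, mul_assoc]
        rw [cancel _ hAu, ← sub_eq_add_neg]
      have hstep : C (i - 1) * Y (i - 1) = -(A i * (W i * Y i)) := by
        rw [hYm, mul_neg, cancel _ hCu, hfac]
      have hWY : W i * Y i = -((A i)⁻¹ * (C (i - 1) * Y (i - 1))) := by
        rw [← cancel' (A i) hAu (W i * Y i), hstep, mul_neg, neg_neg]
      have hfin : Y i = -((W i)⁻¹ * ((A i)⁻¹ * (C (i - 1) * Y (i - 1)))) := by
        rw [← cancel' (W i) hWu (Y i), hWY, mul_neg]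
      rw [hfin, hM i hi2 hi1]
      simp only [mul_assoc]
  intro i hi2 hin
  exact (key (n - i) i hi2 hin rfl).2
end

section
/- Under the standing assumptions, the blocks Z_{ij} of the inverse A⁻¹ satisfy ‖Z_{ij}‖ ≤ ‖Z_{jj}‖ · ∏_{k=i}^{j−1} τ_k for all i < j. -/
open scoped Matrix
attribute [local instance] Matrix.linftyOpNormedRing

lemma blockEq (n m : ℕ) (A B C : ℕ → Matrix (Fin m) (Fin m) ℂ)
    (hC0 : C 0 = 0)
    (hAinv : IsUnit (blockTridiag n m A B C))
    (Z : ℕ → ℕ → Matrix (Fin m) (Fin m) ℂ)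
    (hZ : ∀ i j : Fin n, Z ((i : ℕ) + 1) ((j : ℕ) + 1) =
      Matrix.of fun k l => (blockTridiag n m A B C)⁻¹ (i, k) (j, l))
    (i j : ℕ) (hi : 1 ≤ i) (hij : i < j) (hj : j ≤ n) :
    C (i-1) * Z (i-1) j + A i * Z i j + B i * Z (i+1) j = 0 := by
  set T := blockTridiag n m A B C with hT
  have hTW : T * T⁻¹ = 1 := Matrix.mul_nonsing_inv _ ((Matrix.isUnit_iff_isUnit_det _).mp hAinv)
  have hin : i - 1 < n := by omega
  have hjn : j - 1 < n := by omega
  have hin2 : i < n := by omega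
  have hin0 : i - 2 < n := by omega
  set ii : Fin n := ⟨i-1, hin⟩ with hii
  set jj : Fin n := ⟨j-1, hjn⟩ with hjj
  set t2 : Fin n := ⟨i, hin2⟩ with ht2
  set t0 : Fin n := ⟨i-2, hin0⟩ with ht0
  have hidx : i - 1 + 1 = i := by omega
  ext k l
  have h0 : ∑ t : Fin n, ∑ s : Fin m, T (ii, k) (t, s) * T⁻¹ (t, s) (jj, l) = 0 := by
    have h := congrFun (congrFun hTW (ii, k)) (jj, l)
    rw [Matrix.mul_apply, Fintype.sum_prod_type] at h
    rw [h]
    have hne : ((ii, k) : Fin n × Fin m) ≠ (jj, l) := by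
      intro h'
      have h2 : (ii : ℕ) = (jj : ℕ) := congrArg (fun p => ((Prod.fst p : Fin n) : ℕ)) h'
      have h3 : i - 1 = j - 1 := h2
      omega
    exact Matrix.one_apply_ne hne
  set g : Fin n → ℂ := fun t => ∑ s : Fin m, T (ii, k) (t, s) * T⁻¹ (t, s) (jj, l) with hg
  have hZi : Z i j = Matrix.of fun k l => T⁻¹ (ii, k) (jj, l) := by
    have h := hZ ii jj
    rw [show ((ii : Fin n) : ℕ) = i - 1 from rfl, show ((jj : Fin n) : ℕ) = j - 1 from rfl,
      show i - 1 + 1 = i from by omega, show j - 1 + 1 = j from by omega] at h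
    exact h
  have hZi1 : Z (i+1) j = Matrix.of fun k l => T⁻¹ (t2, k) (jj, l) := by
    have h := hZ t2 jj
    rw [show ((t2 : Fin n) : ℕ) = i from rfl, show ((jj : Fin n) : ℕ) = j - 1 from rfl,
      show j - 1 + 1 = j from by omega] at h
    exact h
  have egA : g ii = (A i * Z i j) k l := by
    rw [Matrix.mul_apply, hg]
    apply Finset.sum_congr rfl
    intro s _
    rw [hZi]
    simp only [hT, blockTridiag, Matrix.of_apply]
    split_ifs with e1
    · rw [hidx]
    · exact absurd trivial e1
  have egB : g t2 = (B i * Z (i+1) j) k l := by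
    rw [Matrix.mul_apply, hg]
    apply Finset.sum_congr rfl
    intro s _
    rw [hZi1]
    simp only [hT, blockTridiag, Matrix.of_apply]
    split_ifs with e1 e2
    · exfalso; have : i - 1 = i := congrArg Fin.val e1; omega
    · rw [hidx]
  rcases Nat.lt_or_ge i 2 with hi1 | hi2
  · -- i = 1 : C 0 term vanishes
    have hCzero : C (i-1) * Z (i-1) j = 0 := by
      rw [show i - 1 = 0 from by omega, hC0, zero_mul]
    have hvanish : ∀ t : Fin n, t ∉ ({ii, t2} : Finset (Fin n)) → g t = 0 := by
      intro t ht
      simp only [Finset.mem_insert, Finset.mem_singleton] at ht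
      push_neg at ht
      obtain ⟨h1, h2⟩ := ht
      have h1' : (t : ℕ) ≠ i - 1 := fun h => h1 (Fin.ext h)
      have h2' : (t : ℕ) ≠ i := fun h => h2 (Fin.ext h)
      apply Finset.sum_eq_zero
      intro s _
      simp only [hg, hT, blockTridiag, Matrix.of_apply]
      split_ifs with e1 e2 e3
      · exact absurd ((congrArg Fin.val e1).symm : (t : ℕ) = i - 1) h1'
      · exfalso; have hx : i - 1 + 1 = (t : ℕ) := e2; omega
      · exfalso; have hx : (t : ℕ) + 1 = i - 1 := e3; omega
      · exact zero_mul _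
    have hsplit : ∑ t : Fin n, g t = g ii + g t2 := by
      rw [← Finset.sum_subset (Finset.subset_univ ({ii, t2} : Finset (Fin n)))
        (fun t _ ht => hvanish t ht),
        Finset.sum_insert (by
          simp only [Finset.mem_singleton]
          intro h
          have : i - 1 = i := congrArg Fin.val h
          omega),
        Finset.sum_singleton]
    simp only [Matrix.add_apply]
    rw [hCzero, Matrix.zero_apply, zero_add, ← egA, ← egB, ← hsplit]
    exact h0
  · -- i ≥ 2
    have hZi0 : Z (i-1) j = Matrix.of fun k l => T⁻¹ (t0, k) (jj, l) := by
      have h := hZ t0 jj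
      rw [show ((t0 : Fin n) : ℕ) = i - 2 from rfl, show ((jj : Fin n) : ℕ) = j - 1 from rfl,
        show i - 2 + 1 = i - 1 from by omega, show j - 1 + 1 = j from by omega] at h
      exact h
    have egC : g t0 = (C (i-1) * Z (i-1) j) k l := by
      rw [Matrix.mul_apply, hg]
      apply Finset.sum_congr rfl
      intro s _
      rw [hZi0]
      simp only [hT, blockTridiag, Matrix.of_apply]
      split_ifs with e1 e2 e3
      · exfalso; have : i - 1 = i - 2 := congrArg Fin.val e1; omega
      · exfalso; have hx : i - 1 + 1 = i - 2 := e2; omega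
      · rw [show i - 2 + 1 = i - 1 from by omega]
      · exact absurd (show i - 2 + 1 = i - 1 from by omega) e3
    have hvanish : ∀ t : Fin n, t ∉ ({t0, ii, t2} : Finset (Fin n)) → g t = 0 := by
      intro t ht
      simp only [Finset.mem_insert, Finset.mem_singleton] at ht
      push_neg at ht
      obtain ⟨h0', h1, h2⟩ := ht
      have h0'' : (t : ℕ) ≠ i - 2 := fun h => h0' (Fin.ext h)
      have h1' : (t : ℕ) ≠ i - 1 := fun h => h1 (Fin.ext h)
      have h2' : (t : ℕ) ≠ i := fun h => h2 (Fin.ext h)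
      apply Finset.sum_eq_zero
      intro s _
      simp only [hg, hT, blockTridiag, Matrix.of_apply]
      split_ifs with e1 e2 e3
      · exact absurd ((congrArg Fin.val e1).symm : (t : ℕ) = i - 1) h1'
      · exfalso; have hx : i - 1 + 1 = (t : ℕ) := e2; omega
      · exfalso; have hx : (t : ℕ) + 1 = i - 1 := e3; omega
      · exact zero_mul _
    have hsplit : ∑ t : Fin n, g t = g t0 + g ii + g t2 := by
      rw [← Finset.sum_subset (Finset.subset_univ ({t0, ii, t2} : Finset (Fin n)))
        (fun t _ ht => hvanish t ht),
        Finset.sum_insert (by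
          simp only [Finset.mem_insert, Finset.mem_singleton]
          push_neg
          refine ⟨fun h => ?_, fun h => ?_⟩
          · have : i - 2 = i - 1 := congrArg Fin.val h; omega
          · have : i - 2 = i := congrArg Fin.val h; omega),
        Finset.sum_insert (by
          simp only [Finset.mem_singleton]
          intro h
          have : i - 1 = i := congrArg Fin.val h
          omega),
        Finset.sum_singleton, add_assoc]
    simp only [Matrix.add_apply]
    rw [← egA, ← egB, ← egC, ← hsplit]
    exact h0

lemma normStep (n m : ℕ) (hm : 1 ≤ m)
    (A B C : ℕ → Matrix (Fin m) (Fin m) ℂ)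
    (hC0 : C 0 = 0)
    (hAinv : IsUnit (blockTridiag n m A B C))
    (hB : ∀ i, 1 ≤ i → i ≤ n - 1 → IsUnit (B i))
    (hAi : ∀ i, 1 ≤ i → i ≤ n → IsUnit (A i))
    (hdom : ∀ i, 1 ≤ i → i ≤ n → ‖(A i)⁻¹ * C (i - 1)‖ + ‖(A i)⁻¹ * B i‖ ≤ 1)
    (τ : ℕ → ℝ)
    (hτ : ∀ i, 1 ≤ i → i ≤ n → τ i = ‖(A i)⁻¹ * B i‖ / (1 - ‖(A i)⁻¹ * C (i - 1)‖))
    (Z : ℕ → ℕ → Matrix (Fin m) (Fin m) ℂ)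
    (hZ : ∀ i j : Fin n, Z ((i : ℕ) + 1) ((j : ℕ) + 1) =
      Matrix.of fun k l => (blockTridiag n m A B C)⁻¹ (i, k) (j, l)) :
    ∀ i j, 1 ≤ i → i < j → j ≤ n → ‖Z i j‖ ≤ τ i * ‖Z (i+1) j‖ := by
  haveI : Nonempty (Fin m) := ⟨⟨0, hm⟩⟩
  -- positivity of ‖(A i)⁻¹ * B i‖ for 1 ≤ i ≤ n - 1
  have hbpos : ∀ i, 1 ≤ i → i ≤ n - 1 → 0 < ‖(A i)⁻¹ * B i‖ := by
    intro i h1 h2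
    have hu : IsUnit ((A i)⁻¹ * B i) :=
      (Matrix.isUnit_nonsing_inv_iff.mpr (hAi i h1 (by omega))).mul (hB i h1 h2)
    have hne : (A i)⁻¹ * B i ≠ 0 := by
      intro h
      rw [h] at hu
      have := (Matrix.isUnit_iff_isUnit_det _).mp hu
      rw [Matrix.det_zero] at this
      exact not_isUnit_zero this
    exact norm_pos_iff.mpr hne
  intro i
  induction i using Nat.strong_induction_on with
  | _ i IH =>
    intro j hi hij hj
    have hin : 1 ≤ i := hi
    have hiN : i ≤ n := by omega
    have hAdet : IsUnit (A i).det := (Matrix.isUnit_iff_isUnit_det _).mp (hAi i hin hiN)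
    have heq := blockEq n m A B C hC0 hAinv Z hZ i j hi hij hj
    -- Z i j = -(X * Z (i-1) j) - Y * Z (i+1) j
    have hZeq : Z i j = -(((A i)⁻¹ * C (i-1)) * Z (i-1) j) - ((A i)⁻¹ * B i) * Z (i+1) j := by
      have hA : A i * Z i j = -(C (i-1) * Z (i-1) j) - B i * Z (i+1) j := by
        calc A i * Z i j
            = (C (i-1) * Z (i-1) j + A i * Z i j + B i * Z (i+1) j)
              - C (i-1) * Z (i-1) j - B i * Z (i+1) j := by abel
          _ = -(C (i-1) * Z (i-1) j) - B i * Z (i+1) j := by rw [heq]; abel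
      calc Z i j = (A i)⁻¹ * (A i * Z i j) := by
            rw [← Matrix.mul_assoc, Matrix.nonsing_inv_mul _ hAdet, Matrix.one_mul]
        _ = -(((A i)⁻¹ * C (i-1)) * Z (i-1) j) - ((A i)⁻¹ * B i) * Z (i+1) j := by
            rw [hA, mul_sub, mul_neg, Matrix.mul_assoc, Matrix.mul_assoc]
    have kb : ‖Z i j‖ ≤ ‖(A i)⁻¹ * C (i-1)‖ * ‖Z (i-1) j‖
        + ‖(A i)⁻¹ * B i‖ * ‖Z (i+1) j‖ := by
      rw [hZeq]
      calc ‖-(((A i)⁻¹ * C (i-1)) * Z (i-1) j) - ((A i)⁻¹ * B i) * Z (i+1) j‖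
          ≤ ‖-(((A i)⁻¹ * C (i-1)) * Z (i-1) j)‖ + ‖((A i)⁻¹ * B i) * Z (i+1) j‖ :=
            norm_sub_le _ _
        _ = ‖((A i)⁻¹ * C (i-1)) * Z (i-1) j‖ + ‖((A i)⁻¹ * B i) * Z (i+1) j‖ := by
            rw [norm_neg]
        _ ≤ ‖(A i)⁻¹ * C (i-1)‖ * ‖Z (i-1) j‖ + ‖(A i)⁻¹ * B i‖ * ‖Z (i+1) j‖ :=
            add_le_add (norm_mul_le _ _) (norm_mul_le _ _)
    have hbi : 0 < ‖(A i)⁻¹ * B i‖ := hbpos i hin (by omega)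
    have hdomi := hdom i hin hiN
    have hτi := hτ i hin hiN
    rcases eq_or_lt_of_le hin with h1 | h2
    · -- i = 1
      have hi1 : i = 1 := h1.symm
      subst hi1
      have hc0 : ‖(A 1)⁻¹ * C (1-1)‖ = 0 := by
        norm_num [hC0]
      rw [hc0, zero_mul, zero_add] at kb
      rw [hτi, hc0]
      norm_num
      exact kb
    · -- i ≥ 2
      have hi2 : 2 ≤ i := h2
      have hIH := IH (i-1) (by omega) j (by omega) (by omega) hj
      rw [show i - 1 + 1 = i from by omega] at hIH
      have hb' : 0 < ‖(A (i-1))⁻¹ * B (i-1)‖ := hbpos (i-1) (by omega) (by omega)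
      have hdom' := hdom (i-1) (by omega) (by omega)
      have hτ' := hτ (i-1) (by omega) (by omega)
      have hτle1 : τ (i-1) ≤ 1 := by
        rw [hτ']
        rw [div_le_one (by linarith)]
        linarith
      have hτnn : 0 ≤ τ (i-1) := by
        rw [hτ']
        apply div_nonneg (norm_nonneg _)
        linarith
      have hcnn : 0 ≤ ‖(A i)⁻¹ * C (i-1)‖ := norm_nonneg _
      have hZnn : 0 ≤ ‖Z i j‖ := norm_nonneg _
      -- ‖Z (i-1) j‖ ≤ τ (i-1) * ‖Z i j‖ ≤ ‖Z i j‖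
      have step : ‖Z i j‖ ≤ ‖(A i)⁻¹ * C (i-1)‖ * ‖Z i j‖
          + ‖(A i)⁻¹ * B i‖ * ‖Z (i+1) j‖ := by
        have h1 : ‖Z (i-1) j‖ ≤ ‖Z i j‖ := by nlinarith [hIH]
        nlinarith [kb, h1]
      have hc1 : 1 - ‖(A i)⁻¹ * C (i-1)‖ > 0 := by linarith
      rw [hτi, div_mul_eq_mul_div, le_div_iff₀ hc1]
      nlinarith [step]

theorem offdiag_bound_upper_triangle
    (n m : ℕ) (hn : 2 ≤ n) (hm : 1 ≤ m)
    (A B C : ℕ → Matrix (Fin m) (Fin m) ℂ)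
    (hC0 : C 0 = 0) (hBn : B n = 0)
    (hAinv : IsUnit (blockTridiag n m A B C))
    (hB : ∀ i, 1 ≤ i → i ≤ n - 1 → IsUnit (B i))
    (hC : ∀ i, 1 ≤ i → i ≤ n - 1 → IsUnit (C i))
    (hAi : ∀ i, 1 ≤ i → i ≤ n → IsUnit (A i))
    (hdom : ∀ i, 1 ≤ i → i ≤ n → ‖(A i)⁻¹ * C (i - 1)‖ + ‖(A i)⁻¹ * B i‖ ≤ 1)
    (hB1 : ‖(A 1)⁻¹ * B 1‖ < 1)
    (hCn : ‖(A n)⁻¹ * C (n - 1)‖ < 1)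
    (τ : ℕ → ℝ)
    (hτ : ∀ i, 1 ≤ i → i ≤ n → τ i = ‖(A i)⁻¹ * B i‖ / (1 - ‖(A i)⁻¹ * C (i - 1)‖))
    (Z : ℕ → ℕ → Matrix (Fin m) (Fin m) ℂ)
    (hZ : ∀ i j : Fin n, Z ((i : ℕ) + 1) ((j : ℕ) + 1) =
      Matrix.of fun k l => (blockTridiag n m A B C)⁻¹ (i, k) (j, l)) :
    ∀ i j, 1 ≤ i → i < j → j ≤ n →
      ‖Z i j‖ ≤ ‖Z j j‖ * ∏ k ∈ Finset.Icc i (j - 1), τ k := by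
  haveI : Nonempty (Fin m) := ⟨⟨0, hm⟩⟩
  have hstep := normStep n m hm A B C hC0 hAinv hB hAi hdom τ hτ Z hZ
  have hbpos : ∀ i, 1 ≤ i → i ≤ n - 1 → 0 < ‖(A i)⁻¹ * B i‖ := by
    intro i h1 h2
    have hu : IsUnit ((A i)⁻¹ * B i) :=
      (Matrix.isUnit_nonsing_inv_iff.mpr (hAi i h1 (by omega))).mul (hB i h1 h2)
    have hne : (A i)⁻¹ * B i ≠ 0 := by
      intro h
      rw [h] at hu
      have := (Matrix.isUnit_iff_isUnit_det _).mp hu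
      rw [Matrix.det_zero] at this
      exact not_isUnit_zero this
    exact norm_pos_iff.mpr hne
  have hτnn : ∀ i, 1 ≤ i → i ≤ n - 1 → 0 ≤ τ i := by
    intro i h1 h2
    have hb := hbpos i h1 h2
    have hd := hdom i h1 (by omega)
    rw [hτ i h1 (by omega)]
    apply div_nonneg (norm_nonneg _)
    linarith
  suffices H : ∀ d i j, 1 ≤ i → i < j → j ≤ n → j = i + d + 1 →
      ‖Z i j‖ ≤ ‖Z j j‖ * ∏ k ∈ Finset.Icc i (j - 1), τ k by
    intro i j hi hij hj
    exact H (j - i - 1) i j hi hij hj (by omega)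
  intro d
  induction d with
  | zero =>
    intro i j hi hij hj hd
    have hj1 : j = i + 1 := by omega
    subst hj1
    rw [show i + 1 - 1 = i from by omega, Finset.Icc_self, Finset.prod_singleton, mul_comm]
    exact hstep i (i+1) hi (by omega) hj
  | succ d IHd =>
    intro i j hi hij hj hd
    have h1 := hstep i j hi hij hj
    have h2 := IHd (i+1) j (by omega) (by omega) hj (by omega)
    have hτi : 0 ≤ τ i := hτnn i hi (by omega)
    have hprod : ∏ k ∈ Finset.Icc i (j - 1), τ k
        = τ i * ∏ k ∈ Finset.Icc (i+1) (j - 1), τ k := by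
      have hmem : i ∈ Finset.Icc i (j-1) := Finset.mem_Icc.mpr ⟨le_rfl, by omega⟩
      rw [← Finset.mul_prod_erase _ _ hmem, Finset.Icc_erase_left, ← Finset.Icc_add_one_left_eq_Ioc]
    calc ‖Z i j‖ ≤ τ i * ‖Z (i+1) j‖ := h1
      _ ≤ τ i * (‖Z j j‖ * ∏ k ∈ Finset.Icc (i+1) (j - 1), τ k) :=
          mul_le_mul_of_nonneg_left h2 hτi
      _ = ‖Z j j‖ * ∏ k ∈ Finset.Icc i (j - 1), τ k := by rw [hprod]; ring
end

section
/- Under the standing assumptions, the blocks Z_{ij} of the inverse A⁻¹ satisfy ‖Z_{ij}‖ ≤ ‖Z_{jj}‖ · ∏_{k=j+1}^{i} ω_k for all i > j. -/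
open scoped Matrix
attribute [local instance] Matrix.linftyOpNormedRing

/-- The `t`-th (0-based) block of column `j` of `M⁻¹`; zero out of range. -/
noncomputable def Eblk (n m : ℕ) (M : Matrix (Fin n × Fin m) (Fin n × Fin m) ℂ)
    (j : Fin n) (t : ℕ) : Matrix (Fin m) (Fin m) ℂ :=
  if h : t < n then Matrix.of fun k l => M⁻¹ (⟨t, h⟩, k) (j, l) else 0

theorem offdiag_bound_lower_triangle
    (n m : ℕ) (hn : 2 ≤ n) (hm : 1 ≤ m)
    (A B C : ℕ → Matrix (Fin m) (Fin m) ℂ)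
    (hC0 : C 0 = 0) (hBn : B n = 0)
    (hAinv : IsUnit (blockTridiag n m A B C))
    (hB : ∀ i, 1 ≤ i → i ≤ n - 1 → IsUnit (B i))
    (hC : ∀ i, 1 ≤ i → i ≤ n - 1 → IsUnit (C i))
    (hAi : ∀ i, 1 ≤ i → i ≤ n → IsUnit (A i))
    (hdom : ∀ i, 1 ≤ i → i ≤ n → ‖(A i)⁻¹ * C (i - 1)‖ + ‖(A i)⁻¹ * B i‖ ≤ 1)
    (hB1 : ‖(A 1)⁻¹ * B 1‖ < 1)
    (hCn : ‖(A n)⁻¹ * C (n - 1)‖ < 1)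
    (ω : ℕ → ℝ)
    (hω : ∀ i, 1 ≤ i → i ≤ n → ω i = ‖(A i)⁻¹ * C (i - 1)‖ / (1 - ‖(A i)⁻¹ * B i‖))
    (Z : ℕ → ℕ → Matrix (Fin m) (Fin m) ℂ)
    (hZ : ∀ i j : Fin n, Z ((i : ℕ) + 1) ((j : ℕ) + 1) =
      Matrix.of fun k l => (blockTridiag n m A B C)⁻¹ (i, k) (j, l)) :
    ∀ i j, 1 ≤ j → j < i → i ≤ n →
      ‖Z i j‖ ≤ ‖Z j j‖ * ∏ k ∈ Finset.Icc (j + 1) i, ω k := by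
  intro i j hj hji hin
  have hi1 : 1 ≤ i := by omega
  haveI : Nonempty (Fin m) := ⟨⟨0, hm⟩⟩
  set M := blockTridiag n m A B C with hMdef
  have hdet : IsUnit M.det := (Matrix.isUnit_iff_isUnit_det M).mp hAinv
  have hMW : M * M⁻¹ = 1 := Matrix.mul_nonsing_inv M hdet
  set jF : Fin n := ⟨j - 1, by omega⟩ with hjFdef
  -- block recurrence from M * M⁻¹ = 1
  have hrec : ∀ p : Fin n, p ≠ jF →
      C (p : ℕ) * Eblk n m M jF ((p : ℕ) - 1) + A ((p : ℕ) + 1) * Eblk n m M jF (p : ℕ)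
        + B ((p : ℕ) + 1) * Eblk n m M jF ((p : ℕ) + 1) = 0 := by
    intro p hpj
    ext k l
    have h0 : (M * M⁻¹) (p, k) (jF, l) = 0 := by
      rw [hMW]
      simp [Matrix.one_apply, Prod.ext_iff, hpj]
    rw [Matrix.mul_apply, Fintype.sum_prod_type] at h0
    have hsplit : ∀ (q : Fin n) (s : Fin m),
        M (p, k) (q, s) * M⁻¹ (q, s) (jF, l)
        = (if q = p then A ((p : ℕ) + 1) k s * M⁻¹ (q, s) (jF, l) else 0)
          + (if (q : ℕ) = (p : ℕ) + 1 then B ((p : ℕ) + 1) k s * M⁻¹ (q, s) (jF, l) else 0)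
          + (if (q : ℕ) + 1 = (p : ℕ) then C (p : ℕ) k s * M⁻¹ (q, s) (jF, l) else 0) := by
      intro q s
      simp only [hMdef, blockTridiag, Matrix.of_apply, Fin.ext_iff]
      by_cases h1 : (p : ℕ) = (q : ℕ)
      · rw [if_pos h1, if_pos h1.symm, if_neg (by omega : ¬(q : ℕ) = (p : ℕ) + 1),
          if_neg (by omega : ¬(q : ℕ) + 1 = (p : ℕ))]
        ring
      · by_cases h2 : (p : ℕ) + 1 = (q : ℕ)
        · rw [if_neg h1, if_pos h2, if_neg (by omega : ¬(q : ℕ) = (p : ℕ)),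
            if_pos h2.symm, if_neg (by omega : ¬(q : ℕ) + 1 = (p : ℕ))]
          ring
        · by_cases h3 : (q : ℕ) + 1 = (p : ℕ)
          · rw [if_neg h1, if_neg h2, if_pos h3, if_neg (by omega : ¬(q : ℕ) = (p : ℕ)),
              if_neg (by omega : ¬(q : ℕ) = (p : ℕ) + 1), if_pos h3, h3]
            ring
          · rw [if_neg h1, if_neg h2, if_neg h3, if_neg (by omega : ¬(q : ℕ) = (p : ℕ)),
              if_neg (by omega : ¬(q : ℕ) = (p : ℕ) + 1), if_neg h3]
            ring
    simp only [hsplit, Finset.sum_add_distrib] at h0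
    have hS1 : (∑ q : Fin n, ∑ s : Fin m,
          if q = p then A ((p : ℕ) + 1) k s * M⁻¹ (q, s) (jF, l) else 0)
        = (A ((p : ℕ) + 1) * Eblk n m M jF (p : ℕ)) k l := by
      rw [Finset.sum_comm]
      simp only [Finset.sum_ite_eq', Finset.mem_univ, if_true]
      rw [Matrix.mul_apply]
      refine Finset.sum_congr rfl fun s _ => ?_
      simp [Eblk, p.isLt]
    have hS2 : (∑ q : Fin n, ∑ s : Fin m,
          if (q : ℕ) = (p : ℕ) + 1 then B ((p : ℕ) + 1) k s * M⁻¹ (q, s) (jF, l) else 0)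
        = (B ((p : ℕ) + 1) * Eblk n m M jF ((p : ℕ) + 1)) k l := by
      rw [Finset.sum_comm]
      by_cases hq : (p : ℕ) + 1 < n
      · simp only [show ∀ q : Fin n, ((q : ℕ) = (p : ℕ) + 1) = (q = ⟨(p : ℕ) + 1, hq⟩)
          from fun q => by simp [Fin.ext_iff]]
        simp only [Finset.sum_ite_eq', Finset.mem_univ, if_true]
        rw [Matrix.mul_apply]
        refine Finset.sum_congr rfl fun s _ => ?_
        simp [Eblk, hq]
      · have hfalse : ∀ q : Fin n, ¬((q : ℕ) = (p : ℕ) + 1) := fun q => by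
          have := q.isLt; omega
        simp only [hfalse, if_false, Finset.sum_const_zero]
        rw [Matrix.mul_apply]
        have hE : Eblk n m M jF ((p : ℕ) + 1) = 0 := by simp [Eblk, hq]
        simp [hE]
    have hS3 : (∑ q : Fin n, ∑ s : Fin m,
          if (q : ℕ) + 1 = (p : ℕ) then C (p : ℕ) k s * M⁻¹ (q, s) (jF, l) else 0)
        = (C (p : ℕ) * Eblk n m M jF ((p : ℕ) - 1)) k l := by
      rw [Finset.sum_comm]
      by_cases hq : 0 < (p : ℕ)
      · have hlt : (p : ℕ) - 1 < n := by have := p.isLt; omega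
        simp only [show ∀ q : Fin n, ((q : ℕ) + 1 = (p : ℕ)) = (q = ⟨(p : ℕ) - 1, hlt⟩)
          from fun q => by simp [Fin.ext_iff]; omega]
        simp only [Finset.sum_ite_eq', Finset.mem_univ, if_true]
        rw [Matrix.mul_apply]
        refine Finset.sum_congr rfl fun s _ => ?_
        simp [Eblk, hlt]
      · have hp0 : (p : ℕ) = 0 := by omega
        have hfalse : ∀ q : Fin n, ¬((q : ℕ) + 1 = (p : ℕ)) := fun q => by omega
        simp only [hfalse, if_false, Finset.sum_const_zero]
        rw [hp0, hC0]
        simp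
    simp only [Matrix.add_apply, Matrix.zero_apply]
    rw [← hS3, ← hS1, ← hS2]
    linear_combination h0
  -- positivity of the subdiagonal coefficients
  have hcpos : ∀ s, 2 ≤ s → s ≤ n → 0 < ‖(A s)⁻¹ * C (s - 1)‖ := by
    intro s h2 hsn
    have hu : IsUnit ((A s)⁻¹ * C (s - 1)) :=
      (Matrix.isUnit_nonsing_inv_iff.mpr (hAi s (by omega) hsn)).mul
        (hC (s - 1) (by omega) (by omega))
    exact norm_pos_iff.mpr hu.ne_zero
  have hblt : ∀ s, 2 ≤ s → s ≤ n → ‖(A s)⁻¹ * B s‖ < 1 := by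
    intro s h2 hsn
    have h1 := hdom s (by omega) hsn
    have h2' := hcpos s h2 hsn
    linarith
  have homega : ∀ s, 2 ≤ s → s ≤ n → 0 ≤ ω s ∧ ω s ≤ 1 := by
    intro s h2 hsn
    have hd := hdom s (by omega) hsn
    have hb := hblt s h2 hsn
    rw [hω s (by omega) hsn]
    constructor
    · exact div_nonneg (norm_nonneg _) (by linarith)
    · rw [div_le_one (by linarith)]; linarith
  -- the one-step bound, by downward induction
  have hkey : ∀ d t : ℕ, n - t ≤ d → j - 1 < t → t < n →
      ‖Eblk n m M jF t‖ ≤ ω (t + 1) * ‖Eblk n m M jF (t - 1)‖ := by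
    intro d
    induction d with
    | zero => intro t h1 _ h3; omega
    | succ d ih =>
      intro t hd hjt htn
      have hpj : (⟨t, htn⟩ : Fin n) ≠ jF := by
        simp only [ne_eq, hjFdef, Fin.mk.injEq]; omega
      have hr : C t * Eblk n m M jF (t - 1) + A (t + 1) * Eblk n m M jF t
          + B (t + 1) * Eblk n m M jF (t + 1) = 0 := hrec ⟨t, htn⟩ hpj
      have hAu : IsUnit (A (t + 1)).det :=
        (Matrix.isUnit_iff_isUnit_det _).mp (hAi (t + 1) (by omega) (by omega))
      have h2 : A (t + 1) * Eblk n m M jF t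
          = -(C t * Eblk n m M jF (t - 1) + B (t + 1) * Eblk n m M jF (t + 1)) := by
        rw [eq_neg_iff_add_eq_zero, ← hr]; abel
      have h3 : Eblk n m M jF t
          = -((A (t + 1))⁻¹ * C t * Eblk n m M jF (t - 1)
              + (A (t + 1))⁻¹ * B (t + 1) * Eblk n m M jF (t + 1)) := by
        have h4 : (A (t + 1))⁻¹ * (A (t + 1) * Eblk n m M jF t) = Eblk n m M jF t := by
          rw [← mul_assoc, Matrix.nonsing_inv_mul _ hAu, one_mul]
        rw [← h4, h2]
        simp only [mul_neg, mul_add, mul_assoc]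
      have hbound : ‖Eblk n m M jF t‖
          ≤ ‖(A (t + 1))⁻¹ * C t‖ * ‖Eblk n m M jF (t - 1)‖
            + ‖(A (t + 1))⁻¹ * B (t + 1)‖ * ‖Eblk n m M jF (t + 1)‖ := by
        rw [h3, norm_neg]
        exact le_trans (norm_add_le _ _) (add_le_add (norm_mul_le _ _) (norm_mul_le _ _))
      by_cases hlast : t + 1 = n
      · have hE0 : Eblk n m M jF (t + 1) = 0 := by
          rw [Eblk, dif_neg (by omega)]
        have hω1 : ω (t + 1) = ‖(A (t + 1))⁻¹ * C t‖ := by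
          rw [hω (t + 1) (by omega) (by omega)]
          have hB0 : B (t + 1) = 0 := by rw [hlast]; exact hBn
          simp [hB0]
        rw [hω1]
        rw [hE0, norm_zero, mul_zero, add_zero] at hbound
        exact hbound
      · have htn1 : t + 1 < n := by omega
        have ih1 : ‖Eblk n m M jF (t + 1)‖ ≤ ω (t + 2) * ‖Eblk n m M jF t‖ :=
          ih (t + 1) (by omega) (by omega) htn1
        have hcp : 0 < ‖(A (t + 1))⁻¹ * C t‖ := hcpos (t + 1) (by omega) (by omega)
        have hd2 : ‖(A (t + 1))⁻¹ * C t‖ + ‖(A (t + 1))⁻¹ * B (t + 1)‖ ≤ 1 :=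
          hdom (t + 1) (by omega) (by omega)
        have hb1' : ‖(A (t + 1))⁻¹ * B (t + 1)‖ < 1 := by linarith
        obtain ⟨hw0, hw1⟩ := homega (t + 2) (by omega) (by omega)
        have h5 : ‖Eblk n m M jF t‖
            ≤ ‖(A (t + 1))⁻¹ * C t‖ * ‖Eblk n m M jF (t - 1)‖
              + ‖(A (t + 1))⁻¹ * B (t + 1)‖ * (ω (t + 2) * ‖Eblk n m M jF t‖) := by
          have h6 := mul_le_mul_of_nonneg_left ih1
            (norm_nonneg ((A (t + 1))⁻¹ * B (t + 1)))
          linarith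
        have hωt : ω (t + 1)
            = ‖(A (t + 1))⁻¹ * C t‖ / (1 - ‖(A (t + 1))⁻¹ * B (t + 1)‖) :=
          hω (t + 1) (by omega) (by omega)
        rw [hωt, div_mul_eq_mul_div, le_div_iff₀ (by linarith)]
        nlinarith [norm_nonneg (Eblk n m M jF t), norm_nonneg (Eblk n m M jF (t - 1)),
          mul_le_of_le_one_right (norm_nonneg ((A (t + 1))⁻¹ * B (t + 1))) hw1]
  -- chaining the one-step bounds
  have hchain : ∀ i', j + 1 ≤ i' → i' ≤ n → ‖Eblk n m M jF (i' - 1)‖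
      ≤ ‖Eblk n m M jF (j - 1)‖ * ∏ k ∈ Finset.Icc (j + 1) i', ω k := by
    intro i' hi'
    induction i', hi' using Nat.le_induction with
    | base =>
      intro hin'
      have hk : ‖Eblk n m M jF j‖ ≤ ω (j + 1) * ‖Eblk n m M jF (j - 1)‖ :=
        hkey (n - j) j (by omega) (by omega) (by omega)
      rw [Finset.Icc_self, Finset.prod_singleton]
      calc ‖Eblk n m M jF (j + 1 - 1)‖ = ‖Eblk n m M jF j‖ := by norm_num
        _ ≤ ω (j + 1) * ‖Eblk n m M jF (j - 1)‖ := hk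
        _ = ‖Eblk n m M jF (j - 1)‖ * ω (j + 1) := mul_comm _ _
    | succ i' hi' ih =>
      intro hin'
      have ihh := ih (by omega)
      have hk : ‖Eblk n m M jF i'‖ ≤ ω (i' + 1) * ‖Eblk n m M jF (i' - 1)‖ :=
        hkey (n - i') i' (by omega) (by omega) (by omega)
      obtain ⟨hw0, _⟩ := homega (i' + 1) (by omega) (by omega)
      calc ‖Eblk n m M jF (i' + 1 - 1)‖ = ‖Eblk n m M jF i'‖ := by norm_num
        _ ≤ ω (i' + 1) * ‖Eblk n m M jF (i' - 1)‖ := hk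
        _ ≤ ω (i' + 1) * (‖Eblk n m M jF (j - 1)‖ * ∏ k ∈ Finset.Icc (j + 1) i', ω k) :=
            mul_le_mul_of_nonneg_left ihh hw0
        _ = ‖Eblk n m M jF (j - 1)‖ * ∏ k ∈ Finset.Icc (j + 1) (i' + 1), ω k := by
            rw [Finset.prod_Icc_succ_top (by omega : j + 1 ≤ i' + 1)]; ring
  -- identify Z with the blocks of the inverse
  have hZE : ∀ t, 1 ≤ t → t ≤ n → Z t j = Eblk n m M jF (t - 1) := by
    intro t ht1 htn
    have h1 : t - 1 < n := by omega
    have h2 : Z (t - 1 + 1) (j - 1 + 1)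
        = Matrix.of fun k l => M⁻¹ (⟨t - 1, h1⟩, k) (jF, l) := hZ ⟨t - 1, h1⟩ jF
    have e1 : t - 1 + 1 = t := by omega
    have e2 : j - 1 + 1 = j := by omega
    rw [e1, e2] at h2
    rw [h2, Eblk, dif_pos h1]
  rw [hZE i hi1 hin, hZE j hj (by omega)]
  exact hchain i (by omega) hin
end

section
/- Under the standing assumptions, the diagonal blocks Z_{ii} of the inverse A⁻¹ satisfy ‖I‖/(‖A_i‖ + τ_{i−1}‖C_{i−1}‖ + ω_{i+1}‖B_i‖) ≤ ‖Z_{ii}‖ for i = 1,…,n, where C_0 = B_n = 0 and τ_0 = ω_{n+1} = 0. -/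
open scoped Matrix
attribute [local instance] Matrix.linftyOpNormedRing

set_option maxHeartbeats 1000000

noncomputable def blk {n m : ℕ} (W : Matrix (Fin n × Fin m) (Fin n × Fin m) ℂ)
    (i j : Fin n) : Matrix (Fin m) (Fin m) ℂ :=
  Matrix.of fun k l => W (i, k) (j, l)

theorem blk_tridiag {n m : ℕ} (A B C : ℕ → Matrix (Fin m) (Fin m) ℂ) (i r : Fin n) :
    blk (blockTridiag n m A B C) i r =
      (if i = r then A ((i : ℕ) + 1) else 0) +
      (if (i : ℕ) + 1 = (r : ℕ) then B ((i : ℕ) + 1) else 0) +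
      (if (r : ℕ) + 1 = (i : ℕ) then C ((r : ℕ) + 1) else 0) := by
  ext k l
  simp only [blk, blockTridiag, Matrix.of_apply, Matrix.add_apply]
  split_ifs with h1 h2 h3 h2 h3 h3 <;>
    first
      | (exfalso; omega)
      | simp_all [Fin.ext_iff]

theorem blk_mul {n m : ℕ} (P Q : Matrix (Fin n × Fin m) (Fin n × Fin m) ℂ) (i j : Fin n) :
    blk (P * Q) i j = ∑ r : Fin n, blk P i r * blk Q r j := by
  ext k l
  simp [blk, Matrix.mul_apply, Fintype.sum_prod_type, Matrix.sum_apply]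

theorem blk_one {n m : ℕ} (i j : Fin n) :
    blk (1 : Matrix (Fin n × Fin m) (Fin n × Fin m) ℂ) i j =
      if i = j then 1 else 0 := by
  ext k l
  by_cases h : i = j <;>
    simp [blk, Matrix.one_apply, Prod.ext_iff, h]

theorem rowEq {n m : ℕ} (A B C : ℕ → Matrix (Fin m) (Fin m) ℂ)
    (W : Matrix (Fin n × Fin m) (Fin n × Fin m) ℂ)
    (hW : blockTridiag n m A B C * W = 1) (i j : Fin n) :
    (if h : 0 < (i : ℕ) then
        C (i : ℕ) * blk W ⟨(i : ℕ) - 1, by have := i.isLt; omega⟩ j else 0) +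
      A ((i : ℕ) + 1) * blk W i j +
      (if h : (i : ℕ) + 1 < n then
        B ((i : ℕ) + 1) * blk W ⟨(i : ℕ) + 1, h⟩ j else 0) =
      if i = j then 1 else 0 := by
  have key : ∑ r : Fin n, blk (blockTridiag n m A B C) i r * blk W r j
      = if i = j then 1 else 0 := by
    rw [← blk_mul, hW, blk_one]
  simp only [blk_tridiag, add_mul, Finset.sum_add_distrib] at key
  have hS1 : ∑ r : Fin n, (if i = r then A ((i : ℕ) + 1) else 0) * blk W r j
      = A ((i : ℕ) + 1) * blk W i j := by
    simp [ite_mul]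
  have hS2 : ∑ r : Fin n, (if (i : ℕ) + 1 = (r : ℕ) then B ((i : ℕ) + 1) else 0) * blk W r j
      = if h : (i : ℕ) + 1 < n then B ((i : ℕ) + 1) * blk W ⟨(i : ℕ) + 1, h⟩ j else 0 := by
    split_ifs with h
    · rw [Finset.sum_eq_single (⟨(i : ℕ) + 1, h⟩ : Fin n)]
      · simp
      · intro b _ hb
        rw [if_neg, zero_mul]
        intro hc
        exact hb (by simp [Fin.ext_iff, ← hc])
      · simp
    · apply Finset.sum_eq_zero
      intro r _
      rw [if_neg, zero_mul]
      have := r.isLt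
      omega
  have hS3 : ∑ r : Fin n, (if (r : ℕ) + 1 = (i : ℕ) then C ((r : ℕ) + 1) else 0) * blk W r j
      = if h : 0 < (i : ℕ) then C (i : ℕ) * blk W ⟨(i : ℕ) - 1, by have := i.isLt; omega⟩ j else 0 := by
    split_ifs with h
    · rw [Finset.sum_eq_single (⟨(i : ℕ) - 1, by have := i.isLt; omega⟩ : Fin n)]
      · simp; rw [if_pos (by omega)]
        have : (i : ℕ) - 1 + 1 = (i : ℕ) := by omega
        rw [this]
      · intro b _ hb
        rw [if_neg, zero_mul]
        intro hc
        exact hb (by simp [Fin.ext_iff]; omega)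
      · simp
    · apply Finset.sum_eq_zero
      intro r _
      rw [if_neg, zero_mul]
      omega
  rw [hS1, hS2, hS3] at key
  rw [← key]
  abel

theorem key_norm {m : ℕ} (Ai Ci Bi X Y Zv : Matrix (Fin m) (Fin m) ℂ)
    (hinv : Ai⁻¹ * Ai = 1)
    (heq : Ci * Y + Ai * X + Bi * Zv = 0) :
    ‖X‖ ≤ ‖Ai⁻¹ * Ci‖ * ‖Y‖ + ‖Ai⁻¹ * Bi‖ * ‖Zv‖ := by
  have h2 : Ai * X = -(Ci * Y) - Bi * Zv := by
    rw [← sub_eq_zero, ← heq]; abel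
  have hx : X = -((Ai⁻¹ * Ci) * Y) - (Ai⁻¹ * Bi) * Zv := by
    calc X = (Ai⁻¹ * Ai) * X := by rw [hinv, one_mul]
    _ = Ai⁻¹ * (Ai * X) := by rw [mul_assoc]
    _ = Ai⁻¹ * (-(Ci * Y) - Bi * Zv) := by rw [h2]
    _ = -((Ai⁻¹ * Ci) * Y) - (Ai⁻¹ * Bi) * Zv := by
        rw [mul_sub, mul_neg, ← mul_assoc, ← mul_assoc]
  calc ‖X‖ = ‖-((Ai⁻¹ * Ci) * Y) - (Ai⁻¹ * Bi) * Zv‖ := by rw [← hx]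
  _ ≤ ‖-((Ai⁻¹ * Ci) * Y)‖ + ‖(Ai⁻¹ * Bi) * Zv‖ := norm_sub_le _ _
  _ = ‖(Ai⁻¹ * Ci) * Y‖ + ‖(Ai⁻¹ * Bi) * Zv‖ := by rw [norm_neg]
  _ ≤ ‖Ai⁻¹ * Ci‖ * ‖Y‖ + ‖Ai⁻¹ * Bi‖ * ‖Zv‖ :=
      add_le_add (norm_mul_le _ _) (norm_mul_le _ _)

theorem diag_block_lower_bound
    (n m : ℕ) (hn : 2 ≤ n) (hm : 1 ≤ m)
    (A B C : ℕ → Matrix (Fin m) (Fin m) ℂ)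
    (hC0 : C 0 = 0) (hBn : B n = 0)
    (hAinv : IsUnit (blockTridiag n m A B C))
    (hB : ∀ i, 1 ≤ i → i ≤ n - 1 → IsUnit (B i))
    (hC : ∀ i, 1 ≤ i → i ≤ n - 1 → IsUnit (C i))
    (hAi : ∀ i, 1 ≤ i → i ≤ n → IsUnit (A i))
    (hdom : ∀ i, 1 ≤ i → i ≤ n → ‖(A i)⁻¹ * C (i - 1)‖ + ‖(A i)⁻¹ * B i‖ ≤ 1)
    (hB1 : ‖(A 1)⁻¹ * B 1‖ < 1)
    (hCn : ‖(A n)⁻¹ * C (n - 1)‖ < 1)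
    (τ : ℕ → ℝ)
    (hτ : ∀ i, 1 ≤ i → i ≤ n → τ i = ‖(A i)⁻¹ * B i‖ / (1 - ‖(A i)⁻¹ * C (i - 1)‖))
    (ω : ℕ → ℝ)
    (hω : ∀ i, 1 ≤ i → i ≤ n → ω i = ‖(A i)⁻¹ * C (i - 1)‖ / (1 - ‖(A i)⁻¹ * B i‖))
    (hτ0 : τ 0 = 0)
    (hωn1 : ω (n + 1) = 0)
    (Z : ℕ → ℕ → Matrix (Fin m) (Fin m) ℂ)
    (hZ : ∀ i j : Fin n, Z ((i : ℕ) + 1) ((j : ℕ) + 1) =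
      Matrix.of fun k l => (blockTridiag n m A B C)⁻¹ (i, k) (j, l)) :
    ∀ i, 1 ≤ i → i ≤ n →
      ‖(1 : Matrix (Fin m) (Fin m) ℂ)‖ /
        (‖A i‖ + τ (i - 1) * ‖C (i - 1)‖ + ω (i + 1) * ‖B i‖) ≤ ‖Z i i‖ := by
  haveI : Nonempty (Fin m) := ⟨⟨0, hm⟩⟩
  set M := blockTridiag n m A B C with hMdef
  set W := M⁻¹ with hWdef
  have hMW : M * W = 1 := Matrix.mul_nonsing_inv M ((Matrix.isUnit_iff_isUnit_det M).mp hAinv)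
  -- inverses of diagonal blocks
  have hinvA : ∀ i, 1 ≤ i → i ≤ n → (A i)⁻¹ * A i = 1 := fun i h1 h2 =>
    Matrix.nonsing_inv_mul _ ((Matrix.isUnit_iff_isUnit_det _).mp (hAi i h1 h2))
  have hmulA : ∀ i, 1 ≤ i → i ≤ n → A i * (A i)⁻¹ = 1 := fun i h1 h2 =>
    Matrix.mul_nonsing_inv _ ((Matrix.isUnit_iff_isUnit_det _).mp (hAi i h1 h2))
  -- strict bounds
  have hClt : ∀ i, 1 ≤ i → i ≤ n → ‖(A i)⁻¹ * C (i - 1)‖ < 1 := by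
    intro i h1 h2
    by_cases hin : i = n
    · subst hin; exact hCn
    · have hBpos : 0 < ‖(A i)⁻¹ * B i‖ := by
        rw [norm_pos_iff]
        intro h0
        have hid : A i * ((A i)⁻¹ * B i) = B i := by
          rw [← mul_assoc, hmulA i h1 h2, one_mul]
        have : B i = 0 := by rw [← hid, h0, mul_zero]
        exact (hB i h1 (by omega)).ne_zero this
      linarith [hdom i h1 h2]
  have hBlt : ∀ i, 1 ≤ i → i ≤ n → ‖(A i)⁻¹ * B i‖ < 1 := by
    intro i h1 h2
    by_cases hi1 : i = 1
    · subst hi1; exact hB1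
    · have hCpos : 0 < ‖(A i)⁻¹ * C (i - 1)‖ := by
        rw [norm_pos_iff]
        intro h0
        have hid : A i * ((A i)⁻¹ * C (i - 1)) = C (i - 1) := by
          rw [← mul_assoc, hmulA i h1 h2, one_mul]
        have : C (i - 1) = 0 := by rw [← hid, h0, mul_zero]
        exact (hC (i - 1) (by omega) (by omega)).ne_zero this
      linarith [hdom i h1 h2]
  have hτnn : ∀ i, 1 ≤ i → i ≤ n → 0 ≤ τ i := by
    intro i h1 h2
    rw [hτ i h1 h2]
    exact div_nonneg (norm_nonneg _) (by linarith [hClt i h1 h2])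
  have hτle : ∀ i, 1 ≤ i → i ≤ n → τ i ≤ 1 := by
    intro i h1 h2
    rw [hτ i h1 h2, div_le_one (by linarith [hClt i h1 h2])]
    linarith [hdom i h1 h2]
  have hωnn : ∀ i, 1 ≤ i → i ≤ n → 0 ≤ ω i := by
    intro i h1 h2
    rw [hω i h1 h2]
    exact div_nonneg (norm_nonneg _) (by linarith [hBlt i h1 h2])
  have hωle : ∀ i, 1 ≤ i → i ≤ n → ω i ≤ 1 := by
    intro i h1 h2
    rw [hω i h1 h2, div_le_one (by linarith [hBlt i h1 h2])]
    linarith [hdom i h1 h2]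
  -- τ decay
  have τdec : ∀ (k : ℕ) (hk1 : k + 1 < n) (j : Fin n), k < (j : ℕ) →
      ‖blk W ⟨k, by omega⟩ j‖ ≤ τ (k + 1) * ‖blk W ⟨k + 1, hk1⟩ j‖ := by
    intro k
    induction k with
    | zero =>
      intro hk1 j hj
      have hreq := rowEq A B C W hMW ⟨0, by omega⟩ j
      rw [dif_neg (by simp), dif_pos (by simpa using hk1),
        if_neg (by intro h; rw [← h] at hj; simp at hj)] at hreq
      have hkey := key_norm (A 1) (C 0) (B 1) (blk W ⟨0, by omega⟩ j) 0
        (blk W ⟨1, hk1⟩ j) (hinvA 1 (by omega) (by omega))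
        (by rw [hC0, zero_mul]; simpa using hreq)
      rw [hC0, mul_zero, norm_zero, zero_mul, zero_add] at hkey
      have hτ1 : τ 1 = ‖(A 1)⁻¹ * B 1‖ := by
        rw [hτ 1 (by omega) (by omega)]
        simp [hC0]
      rw [hτ1]
      exact hkey
    | succ k ih =>
      intro hk1 j hj
      have hreq := rowEq A B C W hMW ⟨k + 1, by omega⟩ j
      rw [dif_pos (by simp), dif_pos (by simpa using hk1),
        if_neg (by intro h; rw [← h] at hj; simp at hj)] at hreq
      have hkey := key_norm (A (k + 2)) (C (k + 1)) (B (k + 2))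
        (blk W ⟨k + 1, by omega⟩ j) (blk W ⟨k, by omega⟩ j)
        (blk W ⟨k + 2, hk1⟩ j) (hinvA (k + 2) (by omega) (by omega))
        (by simpa using hreq)
      have hih := ih (by omega) j (by omega)
      -- notation
      set a := ‖(A (k + 2))⁻¹ * C (k + 1)‖ with ha
      set b := ‖(A (k + 2))⁻¹ * B (k + 2)‖ with hb
      have ha1 : a < 1 := by
        have := hClt (k + 2) (by omega) (by omega)
        simpa using this
      have hτk2 : τ (k + 2) = b / (1 - a) := by
        rw [hτ (k + 2) (by omega) (by omega)]
        norm_num [ha, hb]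
      have hxa : ‖blk W ⟨k + 1, by omega⟩ j‖ ≤
          a * ‖blk W ⟨k + 1, by omega⟩ j‖ + b * ‖blk W ⟨k + 2, hk1⟩ j‖ := by
        have hτ1 := hτle (k + 1) (by omega) (by omega)
        have hτ0' := hτnn (k + 1) (by omega) (by omega)
        have h1 : τ (k + 1) * ‖blk W ⟨k + 1, by omega⟩ j‖ ≤
            ‖blk W ⟨k + 1, by omega⟩ j‖ := by
          nlinarith [norm_nonneg (blk W (⟨k + 1, by omega⟩ : Fin n) j)]
        calc ‖blk W ⟨k + 1, by omega⟩ j‖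
            ≤ a * ‖blk W ⟨k, by omega⟩ j‖ + b * ‖blk W ⟨k + 2, hk1⟩ j‖ := hkey
        _ ≤ a * ‖blk W ⟨k + 1, by omega⟩ j‖ + b * ‖blk W ⟨k + 2, hk1⟩ j‖ := by
            have hann : 0 ≤ a := norm_nonneg _
            nlinarith [hih, h1]
      rw [hτk2, div_mul_eq_mul_div, le_div_iff₀ (by linarith)]
      nlinarith [hxa]
  -- ω decay
  have ωdec : ∀ (d k : ℕ) (hk : k + 1 + d = n) (j : Fin n), (j : ℕ) < k →
      ‖blk W ⟨k, by omega⟩ j‖ ≤ ω (k + 1) * ‖blk W ⟨k - 1, by omega⟩ j‖ := by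
    intro d
    induction d with
    | zero =>
      intro k hk j hj
      have hk0 : 0 < k := by omega
      have hreq := rowEq A B C W hMW ⟨k, by omega⟩ j
      rw [dif_pos (by simpa using hk0), dif_neg (by simp; omega),
        if_neg (by intro h; rw [← h] at hj; simp at hj)] at hreq
      have hkey := key_norm (A (k + 1)) (C k) (B (k + 1))
        (blk W ⟨k, by omega⟩ j) (blk W ⟨k - 1, by omega⟩ j) 0
        (hinvA (k + 1) (by omega) (by omega))
        (by rw [mul_zero]; simpa using hreq)
      simp only [norm_zero, mul_zero, add_zero] at hkey
      have hωk : ω (k + 1) = ‖(A (k + 1))⁻¹ * C k‖ := by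
        have h1 : B (k + 1) = 0 := by
          have hk' : k + 1 = n := by omega
          rw [hk']; exact hBn
        rw [hω (k + 1) (by omega) (by omega), Nat.add_sub_cancel, h1]
        simp
      rw [hωk]
      exact hkey
    | succ d ih =>
      intro k hk j hj
      have hk0 : 0 < k := by omega
      have hreq := rowEq A B C W hMW ⟨k, by omega⟩ j
      rw [dif_pos (by simpa using hk0), dif_pos (by simp; omega),
        if_neg (by intro h; rw [← h] at hj; simp at hj)] at hreq
      have hkey := key_norm (A (k + 1)) (C k) (B (k + 1))
        (blk W ⟨k, by omega⟩ j) (blk W ⟨k - 1, by omega⟩ j)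
        (blk W ⟨k + 1, by omega⟩ j)
        (hinvA (k + 1) (by omega) (by omega))
        (by simpa using hreq)
      have hih := ih (k + 1) (by omega) j (by omega)
      set a := ‖(A (k + 1))⁻¹ * C k‖ with ha
      set b := ‖(A (k + 1))⁻¹ * B (k + 1)‖ with hb
      have hb1 : b < 1 := by
        have := hBlt (k + 1) (by omega) (by omega)
        simpa using this
      have hωk : ω (k + 1) = a / (1 - b) := by
        rw [hω (k + 1) (by omega) (by omega)]
        norm_num [ha, hb]
      have hih2 : ‖blk W ⟨k + 1, by omega⟩ j‖ ≤ ‖blk W ⟨k, by omega⟩ j‖ := by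
        have hω1 := hωle (k + 2) (by omega) (by omega)
        have hω0 := hωnn (k + 2) (by omega) (by omega)
        have heq : ((⟨k + 1 - 1, by omega⟩ : Fin n) : Fin n) = ⟨k, by omega⟩ := by
          apply Fin.ext; simp
        rw [heq] at hih
        nlinarith [norm_nonneg (blk W (⟨k, by omega⟩ : Fin n) j), hih]
      have hxa : ‖blk W ⟨k, by omega⟩ j‖ ≤
          a * ‖blk W ⟨k - 1, by omega⟩ j‖ + b * ‖blk W ⟨k, by omega⟩ j‖ := by
        have hbnn : 0 ≤ b := norm_nonneg _
        nlinarith [hkey, hih2]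
      rw [hωk, div_mul_eq_mul_div, le_div_iff₀ (by linarith)]
      nlinarith [hxa]
  -- main argument
  intro i h1 h2
  have hi1n : i - 1 < n := by omega
  have hreq := rowEq A B C W hMW ⟨i - 1, hi1n⟩ ⟨i - 1, hi1n⟩
  rw [if_pos rfl] at hreq
  have hXnn := norm_nonneg (blk W (⟨i - 1, hi1n⟩ : Fin n) ⟨i - 1, hi1n⟩)
  have ht2 : ‖A (i - 1 + 1) * blk W (⟨i - 1, hi1n⟩ : Fin n) ⟨i - 1, hi1n⟩‖ ≤
      ‖A i‖ * ‖blk W (⟨i - 1, hi1n⟩ : Fin n) ⟨i - 1, hi1n⟩‖ := by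
    have hA : A (i - 1 + 1) = A i := by rw [show i - 1 + 1 = i by omega]
    rw [hA]; exact norm_mul_le _ _
  have ht1 : ‖(if h : 0 < i - 1 then
        C (i - 1) * blk W (⟨i - 1 - 1, by omega⟩ : Fin n) ⟨i - 1, hi1n⟩ else 0)‖ ≤
      τ (i - 1) * ‖C (i - 1)‖ * ‖blk W (⟨i - 1, hi1n⟩ : Fin n) ⟨i - 1, hi1n⟩‖ := by
    by_cases hc : 0 < i - 1
    · rw [dif_pos hc]
      have hdec := τdec (i - 2) (by omega) ⟨i - 1, hi1n⟩ (by simp; omega)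
      have e1 : (⟨i - 2, by omega⟩ : Fin n) = ⟨i - 1 - 1, by omega⟩ := Fin.ext (by simp; omega)
      have e2 : (⟨i - 2 + 1, by omega⟩ : Fin n) = ⟨i - 1, hi1n⟩ := Fin.ext (by simp; omega)
      have e3 : i - 2 + 1 = i - 1 := by omega
      rw [e1, e2, e3] at hdec
      calc ‖C (i - 1) * blk W (⟨i - 1 - 1, by omega⟩ : Fin n) ⟨i - 1, hi1n⟩‖
          ≤ ‖C (i - 1)‖ * ‖blk W (⟨i - 1 - 1, by omega⟩ : Fin n) ⟨i - 1, hi1n⟩‖ :=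
            norm_mul_le _ _
      _ ≤ ‖C (i - 1)‖ * (τ (i - 1) * ‖blk W (⟨i - 1, hi1n⟩ : Fin n) ⟨i - 1, hi1n⟩‖) :=
            mul_le_mul_of_nonneg_left hdec (norm_nonneg _)
      _ = τ (i - 1) * ‖C (i - 1)‖ * ‖blk W (⟨i - 1, hi1n⟩ : Fin n) ⟨i - 1, hi1n⟩‖ := by ring
    · rw [dif_neg hc, norm_zero]
      have : τ (i - 1) = 0 := by rw [show i - 1 = 0 by omega]; exact hτ0
      rw [this]
      simp
  have ht3 : ‖(if h : i - 1 + 1 < n then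
        B (i - 1 + 1) * blk W (⟨i - 1 + 1, h⟩ : Fin n) ⟨i - 1, hi1n⟩ else 0)‖ ≤
      ω (i + 1) * ‖B i‖ * ‖blk W (⟨i - 1, hi1n⟩ : Fin n) ⟨i - 1, hi1n⟩‖ := by
    by_cases hbc : i - 1 + 1 < n
    · rw [dif_pos hbc]
      have hdec := ωdec (n - (i + 1)) i (by omega) ⟨i - 1, hi1n⟩ (by simp; omega)
      have e2 : (⟨i, by omega⟩ : Fin n) = ⟨i - 1 + 1, hbc⟩ := Fin.ext (by simp; omega)
      have e4 : (⟨i - 1, by omega⟩ : Fin n) = ⟨i - 1, hi1n⟩ := rfl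
      rw [e2, e4] at hdec
      have e0 : B (i - 1 + 1) = B i := by rw [show i - 1 + 1 = i by omega]
      calc ‖B (i - 1 + 1) * blk W (⟨i - 1 + 1, hbc⟩ : Fin n) ⟨i - 1, hi1n⟩‖
          ≤ ‖B (i - 1 + 1)‖ * ‖blk W (⟨i - 1 + 1, hbc⟩ : Fin n) ⟨i - 1, hi1n⟩‖ :=
            norm_mul_le _ _
      _ ≤ ‖B (i - 1 + 1)‖ * (ω (i + 1) * ‖blk W (⟨i - 1, hi1n⟩ : Fin n) ⟨i - 1, hi1n⟩‖) :=
            mul_le_mul_of_nonneg_left hdec (norm_nonneg _)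
      _ = ω (i + 1) * ‖B (i - 1 + 1)‖ * ‖blk W (⟨i - 1, hi1n⟩ : Fin n) ⟨i - 1, hi1n⟩‖ := by
            ring
      _ = ω (i + 1) * ‖B i‖ * ‖blk W (⟨i - 1, hi1n⟩ : Fin n) ⟨i - 1, hi1n⟩‖ := by rw [e0]
    · rw [dif_neg hbc, norm_zero]
      have : ω (i + 1) = 0 := by rw [show i = n by omega]; exact hωn1
      rw [this]
      simp
  have hkey : ‖(1 : Matrix (Fin m) (Fin m) ℂ)‖ ≤
      (‖A i‖ + τ (i - 1) * ‖C (i - 1)‖ + ω (i + 1) * ‖B i‖) *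
        ‖blk W (⟨i - 1, hi1n⟩ : Fin n) ⟨i - 1, hi1n⟩‖ := by
    rw [← hreq]
    have hD : (‖A i‖ + τ (i - 1) * ‖C (i - 1)‖ + ω (i + 1) * ‖B i‖) *
        ‖blk W (⟨i - 1, hi1n⟩ : Fin n) ⟨i - 1, hi1n⟩‖ =
        τ (i - 1) * ‖C (i - 1)‖ * ‖blk W (⟨i - 1, hi1n⟩ : Fin n) ⟨i - 1, hi1n⟩‖ +
        ‖A i‖ * ‖blk W (⟨i - 1, hi1n⟩ : Fin n) ⟨i - 1, hi1n⟩‖ +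
        ω (i + 1) * ‖B i‖ * ‖blk W (⟨i - 1, hi1n⟩ : Fin n) ⟨i - 1, hi1n⟩‖ := by ring
    rw [hD]
    exact le_trans (norm_add₃_le) (add_le_add (add_le_add ht1 ht2) ht3)
  have hApos : 0 < ‖A i‖ := by
    rw [norm_pos_iff]
    exact (hAi i h1 h2).ne_zero
  have hq1 : 0 ≤ τ (i - 1) * ‖C (i - 1)‖ := by
    by_cases h : i = 1
    · rw [h]; simp [hτ0]
    · exact mul_nonneg (hτnn (i - 1) (by omega) (by omega)) (norm_nonneg _)
  have hq2 : 0 ≤ ω (i + 1) * ‖B i‖ := by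
    by_cases h : i = n
    · rw [h]; simp [hωn1]
    · exact mul_nonneg (hωnn (i + 1) (by omega) (by omega)) (norm_nonneg _)
  have hZi : Z i i = blk W (⟨i - 1, hi1n⟩ : Fin n) ⟨i - 1, hi1n⟩ := by
    have hz := hZ ⟨i - 1, hi1n⟩ ⟨i - 1, hi1n⟩
    rw [show ((⟨i - 1, hi1n⟩ : Fin n) : ℕ) + 1 = i by simp; omega] at hz
    exact hz
  rw [hZi, div_le_iff₀ (by linarith)]
  nlinarith [hkey]
end

section
/- Under the standing assumptions, for each i = 1,…,n such that ‖A_i⁻¹‖⁻¹ − τ_{i−1}‖C_{i−1}‖ − ω_{i+1}‖B_i‖ > 0, the diagonal block Z_{ii} of the inverse A⁻¹ satisfies ‖Z_{ii}‖ ≤ ‖I‖/(‖A_i⁻¹‖⁻¹ − τ_{i−1}‖C_{i−1}‖ − ω_{i+1}‖B_i‖), where C_0 = B_n = 0 and τ_0 = ω_{n+1} = 0. -/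
open scoped Matrix
attribute [local instance] Matrix.linftyOpNormedRing

lemma blockTridiag_row (n m : ℕ) (A B C : ℕ → Matrix (Fin m) (Fin m) ℂ)
    (hAinv : IsUnit (blockTridiag n m A B C))
    (Z : ℕ → ℕ → Matrix (Fin m) (Fin m) ℂ)
    (hZ : ∀ i j : Fin n, Z ((i : ℕ) + 1) ((j : ℕ) + 1) =
      Matrix.of fun k l => (blockTridiag n m A B C)⁻¹ (i, k) (j, l))
    (hC0 : C 0 = 0) (hBn : B n = 0)
    (r j : Fin n) :
    C (r:ℕ) * Z (r:ℕ) ((j:ℕ)+1) + A ((r:ℕ)+1) * Z ((r:ℕ)+1) ((j:ℕ)+1)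
      + B ((r:ℕ)+1) * Z ((r:ℕ)+2) ((j:ℕ)+1) = if r = j then 1 else 0 := by
  set M := blockTridiag n m A B C with hM
  set Minv := M⁻¹ with hMinv
  have hdet : IsUnit M.det := (Matrix.isUnit_iff_isUnit_det _).1 hAinv
  have hMN : M * Minv = 1 := Matrix.mul_nonsing_inv _ hdet
  ext k l
  have he := Matrix.ext_iff.2 hMN (r, k) (j, l)
  rw [Matrix.mul_apply, Fintype.sum_prod_type] at he
  have hsplit : ∀ p : Fin n,
      (∑ t, M (r,k) (p,t) * Minv (p,t) (j,l)) =
      (if r = p then ∑ t, A ((r:ℕ)+1) k t * Minv (p,t) (j,l) else 0)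
    + (if (r:ℕ)+1 = (p:ℕ) then ∑ t, B ((r:ℕ)+1) k t * Minv (p,t) (j,l) else 0)
    + (if (p:ℕ)+1 = (r:ℕ) then ∑ t, C ((p:ℕ)+1) k t * Minv (p,t) (j,l) else 0) := by
    intro p
    rcases eq_or_ne r p with h1 | h1
    · subst h1
      simp [hM, blockTridiag, (by omega : ¬((r:ℕ)+1 = (r:ℕ)))]
    · by_cases h2 : (r:ℕ)+1 = (p:ℕ)
      · have h3 : ¬((p:ℕ)+1 = (r:ℕ)) := by omega
        simp [hM, blockTridiag, h1, h2, h3]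
      · by_cases h3 : (p:ℕ)+1 = (r:ℕ)
        · simp [hM, blockTridiag, h1, h2, h3]
        · simp [hM, blockTridiag, h1, h2, h3]
  simp only [hsplit] at he
  rw [Finset.sum_add_distrib, Finset.sum_add_distrib] at he
  have S1 : (∑ p : Fin n, if r = p then (∑ t, A ((r:ℕ)+1) k t * Minv (p,t) (j,l)) else 0)
      = ∑ t, A ((r:ℕ)+1) k t * Z ((r:ℕ)+1) ((j:ℕ)+1) t l := by
    rw [hZ r j]
    simp
  have S2 : (∑ p : Fin n, if (r:ℕ)+1 = (p:ℕ) then (∑ t, B ((r:ℕ)+1) k t * Minv (p,t) (j,l)) else 0)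
      = ∑ t, B ((r:ℕ)+1) k t * Z ((r:ℕ)+2) ((j:ℕ)+1) t l := by
    by_cases h : (r:ℕ)+1 < n
    · rw [Finset.sum_eq_single (⟨(r:ℕ)+1, h⟩ : Fin n)]
      · rw [if_pos rfl, hZ ⟨(r:ℕ)+1, h⟩ j]
        simp
      · intro p _ hp
        rw [if_neg]
        intro hc
        exact hp (Fin.ext hc.symm)
      · simp
    · have h1 : (r:ℕ)+1 = n := by have := r.2; omega
      have hB0 : B ((r:ℕ)+1) = 0 := by rw [h1, hBn]
      rw [Finset.sum_eq_zero, Finset.sum_eq_zero]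
      · intro t _
        rw [hB0]
        simp
      · intro p _
        rw [if_neg]
        have := p.2
        omega
  have S3 : (∑ p : Fin n, if (p:ℕ)+1 = (r:ℕ) then (∑ t, C ((p:ℕ)+1) k t * Minv (p,t) (j,l)) else 0)
      = ∑ t, C (r:ℕ) k t * Z (r:ℕ) ((j:ℕ)+1) t l := by
    by_cases h : 0 < (r:ℕ)
    · have h' : (r:ℕ)-1 < n := by have := r.2; omega
      have e : ((⟨(r:ℕ)-1, h'⟩ : Fin n) : ℕ) + 1 = (r:ℕ) := by simp; omega
      have hZ' : Z (r:ℕ) ((j:ℕ)+1) = Matrix.of fun a b => Minv (⟨(r:ℕ)-1, h'⟩, a) (j, b) := by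
        have := hZ ⟨(r:ℕ)-1, h'⟩ j
        rwa [e] at this
      rw [Finset.sum_eq_single (⟨(r:ℕ)-1, h'⟩ : Fin n)]
      · rw [if_pos e, hZ']
        apply Finset.sum_congr rfl
        intro t _
        rw [e]
        simp
      · intro p _ hp
        rw [if_neg]
        intro hc
        apply hp
        apply Fin.ext
        simp
        omega
      · simp
    · have h0 : (r:ℕ) = 0 := by omega
      rw [Finset.sum_eq_zero, Finset.sum_eq_zero]
      · intro t _
        rw [h0, hC0]
        simp
      · intro p _
        rw [if_neg]
        omega
  rw [S1, S2, S3] at he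
  have hgoal2 : ((if r = j then (1 : Matrix (Fin m) (Fin m) ℂ) else 0)) k l
      = if (r,k) = ((j,l) : Fin n × Fin m) then (1:ℂ) else 0 := by
    by_cases hrj : r = j
    · subst hrj
      simp [Matrix.one_apply, Prod.ext_iff]
    · simp [hrj, Prod.ext_iff]
  rw [hgoal2]
  simp only [Matrix.add_apply, Matrix.mul_apply]
  rw [Matrix.one_apply] at he
  rw [← he]; ring


theorem diag_block_upper_bound
    (n m : ℕ) (hn : 2 ≤ n) (hm : 1 ≤ m)
    (A B C : ℕ → Matrix (Fin m) (Fin m) ℂ)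
    (hC0 : C 0 = 0) (hBn : B n = 0)
    (hAinv : IsUnit (blockTridiag n m A B C))
    (hB : ∀ i, 1 ≤ i → i ≤ n - 1 → IsUnit (B i))
    (hC : ∀ i, 1 ≤ i → i ≤ n - 1 → IsUnit (C i))
    (hAi : ∀ i, 1 ≤ i → i ≤ n → IsUnit (A i))
    (hdom : ∀ i, 1 ≤ i → i ≤ n → ‖(A i)⁻¹ * C (i - 1)‖ + ‖(A i)⁻¹ * B i‖ ≤ 1)
    (hB1 : ‖(A 1)⁻¹ * B 1‖ < 1)
    (hCn : ‖(A n)⁻¹ * C (n - 1)‖ < 1)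
    (τ : ℕ → ℝ)
    (hτ : ∀ i, 1 ≤ i → i ≤ n → τ i = ‖(A i)⁻¹ * B i‖ / (1 - ‖(A i)⁻¹ * C (i - 1)‖))
    (ω : ℕ → ℝ)
    (hω : ∀ i, 1 ≤ i → i ≤ n → ω i = ‖(A i)⁻¹ * C (i - 1)‖ / (1 - ‖(A i)⁻¹ * B i‖))
    (hτ0 : τ 0 = 0)
    (hωn1 : ω (n + 1) = 0)
    (Z : ℕ → ℕ → Matrix (Fin m) (Fin m) ℂ)
    (hZ : ∀ i j : Fin n, Z ((i : ℕ) + 1) ((j : ℕ) + 1) =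
      Matrix.of fun k l => (blockTridiag n m A B C)⁻¹ (i, k) (j, l)) :
    ∀ i, 1 ≤ i → i ≤ n →
      0 < ‖(A i)⁻¹‖⁻¹ - τ (i - 1) * ‖C (i - 1)‖ - ω (i + 1) * ‖B i‖ →
      ‖Z i i‖ ≤ ‖(1 : Matrix (Fin m) (Fin m) ℂ)‖ /
        (‖(A i)⁻¹‖⁻¹ - τ (i - 1) * ‖C (i - 1)‖ - ω (i + 1) * ‖B i‖) := by
  haveI : Nonempty (Fin m) := ⟨⟨0, by omega⟩⟩
  haveI : Nontrivial (Matrix (Fin m) (Fin m) ℂ) := by infer_instance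
  -- the block row identity, ℕ-indexed
  have row : ∀ rr jj : ℕ, 1 ≤ rr → rr ≤ n → 1 ≤ jj → jj ≤ n →
      C (rr-1) * Z (rr-1) jj + A rr * Z rr jj + B rr * Z (rr+1) jj
        = if rr = jj then 1 else 0 := by
    intro rr jj h1 h2 h3 h4
    have hr : rr - 1 < n := by omega
    have hj : jj - 1 < n := by omega
    have h := blockTridiag_row n m A B C hAinv Z hZ hC0 hBn ⟨rr-1, hr⟩ ⟨jj-1, hj⟩
    simp only [Fin.val_mk] at h
    rw [show rr-1+1 = rr from by omega, show rr-1+2 = rr+1 from by omega,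
      show jj-1+1 = jj from by omega] at h
    have hiff : ((⟨rr-1, hr⟩ : Fin n) = ⟨jj-1, hj⟩) ↔ rr = jj := by
      rw [Fin.ext_iff]; simp only [Fin.val_mk]; omega
    rwa [if_congr hiff rfl rfl] at h
  have hAiu : ∀ r, 1 ≤ r → r ≤ n → IsUnit ((A r)⁻¹) :=
    fun r h1 h2 => (Matrix.isUnit_nonsing_inv_iff).2 (hAi r h1 h2)
  -- norm inequality for off-diagonal rows
  have rownorm : ∀ rr jj, 1 ≤ rr → rr ≤ n → 1 ≤ jj → jj ≤ n → rr ≠ jj →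
      ‖Z rr jj‖ ≤ ‖(A rr)⁻¹ * C (rr-1)‖ * ‖Z (rr-1) jj‖
        + ‖(A rr)⁻¹ * B rr‖ * ‖Z (rr+1) jj‖ := by
    intro rr jj h1 h2 h3 h4 hne
    have e := row rr jj h1 h2 h3 h4
    rw [if_neg hne] at e
    have hUdet : IsUnit (A rr).det := (Matrix.isUnit_iff_isUnit_det _).1 (hAi rr h1 h2)
    have hid : (A rr)⁻¹ * (A rr * Z rr jj) = Z rr jj := by
      rw [← mul_assoc, Matrix.nonsing_inv_mul _ hUdet, one_mul]
    have hmid : A rr * Z rr jj = -(C (rr-1) * Z (rr-1) jj) - B rr * Z (rr+1) jj := by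
      have e2 : C (rr-1) * Z (rr-1) jj + (A rr * Z rr jj + B rr * Z (rr+1) jj) = 0 := by
        rw [← add_assoc]; exact e
      exact eq_sub_of_add_eq (eq_neg_of_add_eq_zero_right e2)
    have hzz : Z rr jj = -(((A rr)⁻¹ * C (rr-1)) * Z (rr-1) jj)
        - ((A rr)⁻¹ * B rr) * Z (rr+1) jj := by
      rw [← hid, hmid, mul_sub, mul_neg, ← mul_assoc, ← mul_assoc]
    calc ‖Z rr jj‖ = ‖-(((A rr)⁻¹ * C (rr-1)) * Z (rr-1) jj)
          - ((A rr)⁻¹ * B rr) * Z (rr+1) jj‖ := by rw [← hzz]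
      _ ≤ ‖-(((A rr)⁻¹ * C (rr-1)) * Z (rr-1) jj)‖
          + ‖((A rr)⁻¹ * B rr) * Z (rr+1) jj‖ := norm_sub_le _ _
      _ ≤ _ := by
          rw [norm_neg]
          exact add_le_add (norm_mul_le _ _) (norm_mul_le _ _)
  -- diagonal identity
  have diag : ∀ jj, 1 ≤ jj → jj ≤ n →
      A jj * Z jj jj = 1 - C (jj-1) * Z (jj-1) jj - B jj * Z (jj+1) jj := by
    intro jj h1 h2
    have e := row jj jj h1 h2 h1 h2
    rw [if_pos rfl] at e
    have e2 := eq_sub_of_add_eq' (eq_sub_of_add_eq e)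
    rw [e2]; abel
  -- scalar facts
  have hbpos : ∀ r, 1 ≤ r → r ≤ n-1 → 0 < ‖(A r)⁻¹ * B r‖ := by
    intro r h1 h2
    rw [norm_pos_iff]
    exact ((hAiu r h1 (by omega)).mul (hB r h1 h2)).ne_zero
  have hcpos : ∀ r, 2 ≤ r → r ≤ n → 0 < ‖(A r)⁻¹ * C (r-1)‖ := by
    intro r h1 h2
    rw [norm_pos_iff]
    exact ((hAiu r (by omega) h2).mul (hC (r-1) (by omega) (by omega))).ne_zero
  have hc1 : ‖(A 1)⁻¹ * C 0‖ = 0 := by rw [hC0, mul_zero, norm_zero]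
  have hbn0 : ‖(A n)⁻¹ * B n‖ = 0 := by rw [hBn, mul_zero, norm_zero]
  have hclt : ∀ r, 1 ≤ r → r ≤ n → ‖(A r)⁻¹ * C (r-1)‖ < 1 := by
    intro r h1 h2
    rcases eq_or_lt_of_le h1 with h | h
    · rw [← h]
      simp only [show (1:ℕ)-1 = 0 from rfl]
      rw [hc1]; norm_num
    · rcases eq_or_lt_of_le h2 with h' | h'
      · rw [h']; exact hCn
      · have hb := hbpos r (by omega) (by omega)
        have hd := hdom r (by omega) (by omega)
        linarith
  have hblt : ∀ r, 1 ≤ r → r ≤ n → ‖(A r)⁻¹ * B r‖ < 1 := by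
    intro r h1 h2
    rcases eq_or_lt_of_le h1 with h | h
    · rw [← h]; exact hB1
    · rcases eq_or_lt_of_le h2 with h' | h'
      · rw [h', hbn0]; norm_num
      · have hb := hcpos r (by omega) (by omega)
        have hd := hdom r (by omega) (by omega)
        linarith
  have hτ1 : ∀ r, 1 ≤ r → r ≤ n → τ r ≤ 1 := by
    intro r h1 h2
    rw [hτ r h1 h2, div_le_one (by linarith [hclt r h1 h2])]
    linarith [hdom r h1 h2]
  have hω1 : ∀ r, 1 ≤ r → r ≤ n → ω r ≤ 1 := by
    intro r h1 h2
    rw [hω r h1 h2, div_le_one (by linarith [hblt r h1 h2])]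
    linarith [hdom r h1 h2]
  have hτnn : ∀ r, 1 ≤ r → r ≤ n → 0 ≤ τ r := by
    intro r h1 h2
    rw [hτ r h1 h2]
    exact div_nonneg (norm_nonneg _) (by linarith [hclt r h1 h2])
  -- upward decay
  have hup : ∀ k, 1 ≤ k → ∀ jj, k < jj → jj ≤ n → ‖Z k jj‖ ≤ τ k * ‖Z (k+1) jj‖ := by
    intro k hk
    induction k, hk using Nat.le_induction with
    | base =>
      intro jj hj1 hj2
      have h := rownorm 1 jj (by omega) (by omega) (by omega) (by omega) (by omega)
      simp only [show (1:ℕ)-1 = 0 from rfl] at h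
      rw [hc1] at h
      have hτ1v : τ 1 = ‖(A 1)⁻¹ * B 1‖ := by
        rw [hτ 1 (by omega) (by omega)]
        simp only [show (1:ℕ)-1 = 0 from rfl]
        rw [hc1]; norm_num
      rw [hτ1v]
      linarith
    | succ k hk IH =>
      intro jj hj1 hj2
      have hIH := IH jj (by omega) hj2
      have h := rownorm (k+1) jj (by omega) (by omega) (by omega) (by omega) (by omega)
      simp only [Nat.add_sub_cancel] at h
      have hcl := hclt (k+1) (by omega) (by omega)
      simp only [Nat.add_sub_cancel] at hcl
      have ht1 := hτ1 k (by omega) (by omega)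
      rw [hτ (k+1) (by omega) (by omega)]
      simp only [Nat.add_sub_cancel]
      rw [div_mul_eq_mul_div, le_div_iff₀ (by linarith)]
      have q1 : ‖(A (k+1))⁻¹ * C k‖ * ‖Z k jj‖
          ≤ ‖(A (k+1))⁻¹ * C k‖ * (τ k * ‖Z (k+1) jj‖) :=
        mul_le_mul_of_nonneg_left hIH (norm_nonneg _)
      have q2 : ‖(A (k+1))⁻¹ * C k‖ * (τ k * ‖Z (k+1) jj‖)
          ≤ ‖(A (k+1))⁻¹ * C k‖ * (1 * ‖Z (k+1) jj‖) :=
        mul_le_mul_of_nonneg_left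
          (mul_le_mul_of_nonneg_right ht1 (norm_nonneg _)) (norm_nonneg _)
      nlinarith [norm_nonneg (Z (k+1) jj), norm_nonneg ((A (k+1))⁻¹ * C k)]
  -- downward decay
  have hdownAux : ∀ d k, n ≤ k + d → ∀ jj, 1 ≤ jj → jj < k → k ≤ n →
      ‖Z k jj‖ ≤ ω k * ‖Z (k-1) jj‖ := by
    intro d
    induction d with
    | zero =>
      intro k hkd jj h1 h2 h3
      have hk : k = n := by omega
      subst hk
      have h := rownorm k jj (by omega) le_rfl h1 (by omega) (by omega)
      rw [hbn0] at h
      have hωv : ω k = ‖(A k)⁻¹ * C (k-1)‖ := by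
        rw [hω k (by omega) le_rfl, hbn0]; norm_num
      rw [hωv]
      linarith
    | succ d IHd =>
      intro k hkd jj h1 h2 h3
      by_cases hcase : n ≤ k + d
      · exact IHd k hcase jj h1 h2 h3
      · have hklt : k < n := by omega
        have hIH := IHd (k+1) (by omega) jj h1 (by omega) (by omega)
        simp only [Nat.add_sub_cancel] at hIH
        have h := rownorm k jj (by omega) (by omega) h1 (by omega) (by omega)
        have hbl := hblt k (by omega) (by omega)
        have hw1 := hω1 (k+1) (by omega) (by omega)
        rw [hω k (by omega) (by omega), div_mul_eq_mul_div, le_div_iff₀ (by linarith)]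
        have q1 : ‖(A k)⁻¹ * B k‖ * ‖Z (k+1) jj‖
            ≤ ‖(A k)⁻¹ * B k‖ * (ω (k+1) * ‖Z k jj‖) :=
          mul_le_mul_of_nonneg_left hIH (norm_nonneg _)
        have q2 : ‖(A k)⁻¹ * B k‖ * (ω (k+1) * ‖Z k jj‖)
            ≤ ‖(A k)⁻¹ * B k‖ * (1 * ‖Z k jj‖) :=
          mul_le_mul_of_nonneg_left
            (mul_le_mul_of_nonneg_right hw1 (norm_nonneg _)) (norm_nonneg _)
        nlinarith [norm_nonneg (Z k jj), norm_nonneg ((A k)⁻¹ * B k)]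
  -- final assembly
  intro i h1 h2 hpos
  have hd := diag i h1 h2
  have hnAZ : ‖A i * Z i i‖ ≤ ‖(1 : Matrix (Fin m) (Fin m) ℂ)‖
      + ‖C (i-1)‖ * ‖Z (i-1) i‖ + ‖B i‖ * ‖Z (i+1) i‖ := by
    rw [hd]
    refine le_trans (norm_sub_le _ _) ?_
    refine le_trans (add_le_add (norm_sub_le _ _) le_rfl) ?_
    exact add_le_add (add_le_add le_rfl (norm_mul_le _ _)) (norm_mul_le _ _)
  have hUdet : IsUnit (A i).det := (Matrix.isUnit_iff_isUnit_det _).1 (hAi i h1 h2)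
  have hZle : ‖Z i i‖ ≤ ‖(A i)⁻¹‖ * ‖A i * Z i i‖ := by
    have hid : (A i)⁻¹ * (A i * Z i i) = Z i i := by
      rw [← mul_assoc, Matrix.nonsing_inv_mul _ hUdet, one_mul]
    calc ‖Z i i‖ = ‖(A i)⁻¹ * (A i * Z i i)‖ := by rw [hid]
      _ ≤ _ := norm_mul_le _ _
  have hApos : 0 < ‖(A i)⁻¹‖ := norm_pos_iff.2 (hAiu i h1 h2).ne_zero
  have h5 : ‖(A i)⁻¹‖⁻¹ * ‖Z i i‖ ≤ ‖A i * Z i i‖ := (inv_mul_le_iff₀ hApos).2 hZle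
  have hCt : ‖C (i-1)‖ * ‖Z (i-1) i‖ ≤ τ (i-1) * ‖C (i-1)‖ * ‖Z i i‖ := by
    rcases eq_or_lt_of_le h1 with h | h
    · rw [← h]
      simp only [show (1:ℕ)-1 = 0 from rfl]
      rw [hC0, hτ0]
      simp
    · have hu := hup (i-1) (by omega) i (by omega) h2
      rw [show i-1+1 = i from by omega] at hu
      calc ‖C (i-1)‖ * ‖Z (i-1) i‖ ≤ ‖C (i-1)‖ * (τ (i-1) * ‖Z i i‖) :=
            mul_le_mul_of_nonneg_left hu (norm_nonneg _)
        _ = τ (i-1) * ‖C (i-1)‖ * ‖Z i i‖ := by ring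
  have hBt : ‖B i‖ * ‖Z (i+1) i‖ ≤ ω (i+1) * ‖B i‖ * ‖Z i i‖ := by
    rcases eq_or_lt_of_le h2 with h | h
    · rw [h, hBn, hωn1]
      simp
    · have hdn := hdownAux n (i+1) (by omega) i h1 (by omega) (by omega)
      simp only [Nat.add_sub_cancel] at hdn
      calc ‖B i‖ * ‖Z (i+1) i‖ ≤ ‖B i‖ * (ω (i+1) * ‖Z i i‖) :=
            mul_le_mul_of_nonneg_left hdn (norm_nonneg _)
        _ = ω (i+1) * ‖B i‖ * ‖Z i i‖ := by ring
  rw [le_div_iff₀ hpos]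
  nlinarith [h5, hnAZ, hCt, hBt]
end

section
/- Under the standing assumptions, the superdiagonal and subdiagonal blocks of the inverse A⁻¹ satisfy Z_{i−1,i} = −L_{i−1}Z_{ii} for i = 2,…,n and Z_{i+1,i} = −M_{i+1}Z_{ii} for i = 1,…,n−1, where L_i and M_i are the matrices defined by the recursions L_1 = T_1 = A_1⁻¹B_1, T_i = I − A_i⁻¹C_{i−1}L_{i−1}, L_i = T_i⁻¹A_i⁻¹B_i (i = 2,…,n−1) and M_n = W_n = A_n⁻¹C_{n−1}, W_i = I − A_i⁻¹B_iM_{i+1}, M_i = W_i⁻¹A_i⁻¹C_{i−1} (i = n−1,…,2). -/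
open scoped Matrix
attribute [local instance] Matrix.linftyOpNormedRing

lemma key_row (n m : ℕ) (hn : 2 ≤ n)
    (A B C : ℕ → Matrix (Fin m) (Fin m) ℂ)
    (hC0 : C 0 = 0) (hBn : B n = 0)
    (hAinv : IsUnit (blockTridiag n m A B C))
    (Z : ℕ → ℕ → Matrix (Fin m) (Fin m) ℂ)
    (hZ : ∀ i j : Fin n, Z ((i : ℕ) + 1) ((j : ℕ) + 1) =
      Matrix.of fun k l => (blockTridiag n m A B C)⁻¹ (i, k) (j, l))
    (i j : ℕ) (hi1 : 1 ≤ i) (hin : i ≤ n) (hj1 : 1 ≤ j) (hjn : j ≤ n) :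
    C (i-1) * Z (i-1) j + A i * Z i j + B i * Z (i+1) j
      = (if i = j then (1 : Matrix (Fin m) (Fin m) ℂ) else 0) := by
  set D := blockTridiag n m A B C with hD
  set E := Matrix.compRingEquiv (Fin n) (Fin m) ℂ with hE
  have hdet : IsUnit D.det := (Matrix.isUnit_iff_isUnit_det D).mp hAinv
  have h1 : D * D⁻¹ = 1 := Matrix.mul_nonsing_inv D hdet
  have h1' : E.symm D * E.symm D⁻¹ = 1 := by rw [← map_mul, h1, map_one]
  set i' : Fin n := ⟨i-1, by omega⟩ with hi'
  set j' : Fin n := ⟨j-1, by omega⟩ with hj'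
  have hvi : (i' : ℕ) = i - 1 := rfl
  have hvj : (j' : ℕ) = j - 1 := rfl
  have h2 : ∑ p : Fin n, E.symm D i' p * E.symm D⁻¹ p j'
      = (if i' = j' then 1 else 0) := by
    have h := congrFun (congrFun h1' i') j'
    rwa [Matrix.mul_apply, Matrix.one_apply] at h
  have hZB : ∀ p : Fin n, E.symm D⁻¹ p j' = Z ((p : ℕ)+1) j := by
    intro p
    have h := hZ p j'
    rw [show ((j' : ℕ) + 1) = j from by rw [hvj]; omega] at h
    exact h.symm
  have hDB : ∀ p : Fin n, E.symm D i' p =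
      if p = i' then A i else if (p : ℕ) = i then B i
      else if (p : ℕ) + 1 = i - 1 then C (i-1) else 0 := by
    intro p
    ext k l
    show D (i', k) (p, l) = _
    rw [hD]
    simp only [blockTridiag, Matrix.of_apply]
    by_cases h1 : p = i'
    · rw [if_pos h1.symm, if_pos h1]
      subst h1
      rw [show i - 1 + 1 = i from by omega]
    · rw [if_neg (fun h => h1 h.symm), if_neg h1]
      by_cases h2 : (p : ℕ) = i
      · rw [if_pos (show (i' : ℕ) + 1 = (p : ℕ) from by rw [hvi]; omega), if_pos h2]
        rw [show i - 1 + 1 = i from by omega]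
      · rw [if_neg (show ¬((i' : ℕ) + 1 = (p : ℕ)) from by rw [hvi]; omega), if_neg h2]
        by_cases h3 : (p : ℕ) + 1 = i - 1
        · rw [if_pos (show (p : ℕ) + 1 = (i' : ℕ) from by rw [hvi]; omega), if_pos h3]
          rw [h3]
        · rw [if_neg (show ¬((p : ℕ) + 1 = (i' : ℕ)) from by rw [hvi]; omega), if_neg h3]
          simp
  have hterm : ∀ p : Fin n, E.symm D i' p * E.symm D⁻¹ p j' =
      (if p = i' then A i * E.symm D⁻¹ p j' else 0)
      + ((if (p : ℕ) = i then B i * E.symm D⁻¹ p j' else 0)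
      + (if (p : ℕ) + 1 = i - 1 then C (i-1) * E.symm D⁻¹ p j' else 0)) := by
    intro p
    rw [hDB p]
    by_cases h1 : p = i'
    · have e1 : (p : ℕ) = i - 1 := by rw [h1, hvi]
      rw [if_pos h1, if_pos h1, if_neg (by omega), if_neg (by omega)]
      simp
    · rw [if_neg h1, if_neg h1]
      have e2 : (p : ℕ) ≠ i - 1 := fun h => h1 (Fin.ext (by rw [h, hvi]))
      by_cases h2 : (p : ℕ) = i
      · rw [if_pos h2, if_pos h2, if_neg (by omega)]
        simp
      · rw [if_neg h2, if_neg h2]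
        by_cases h3 : (p : ℕ) + 1 = i - 1
        · rw [if_pos h3, if_pos h3]; simp
        · rw [if_neg h3, if_neg h3]; simp
  have h3 : ∑ p : Fin n, E.symm D i' p * E.symm D⁻¹ p j'
      = A i * Z i j + (B i * Z (i+1) j + C (i-1) * Z (i-1) j) := by
    rw [Finset.sum_congr rfl fun p _ => hterm p, Finset.sum_add_distrib,
      Finset.sum_add_distrib]
    congr 1
    · rw [Finset.sum_ite_eq' Finset.univ i' (fun p => A i * E.symm D⁻¹ p j')]
      rw [if_pos (Finset.mem_univ _), hZB i']
      rw [show (i' : ℕ) + 1 = i from by rw [hvi]; omega]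
    congr 1
    · by_cases hiv : i < n
      · have hc : ∀ p : Fin n, ((p : ℕ) = i) = (p = (⟨i, hiv⟩ : Fin n)) := by
          intro p; simp only [eq_iff_iff, Fin.ext_iff]
        simp_rw [hc]
        rw [Finset.sum_ite_eq' Finset.univ (⟨i, hiv⟩ : Fin n)
          (fun p => B i * E.symm D⁻¹ p j')]
        rw [if_pos (Finset.mem_univ _), hZB]
      · have hin' : i = n := by omega
        rw [Finset.sum_eq_zero (fun p _ => if_neg (by have := p.isLt; omega))]
        rw [hin', hBn, zero_mul]
    · by_cases hi2 : 2 ≤ i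
      · have hc : ∀ p : Fin n, ((p : ℕ) + 1 = i - 1) = (p = (⟨i-2, by omega⟩ : Fin n)) := by
          intro p; simp only [eq_iff_iff, Fin.ext_iff]; omega
        simp_rw [hc]
        rw [Finset.sum_ite_eq' Finset.univ (⟨i-2, by omega⟩ : Fin n)
          (fun p => C (i-1) * E.symm D⁻¹ p j')]
        rw [if_pos (Finset.mem_univ _), hZB]
        rw [show (i : ℕ) - 2 + 1 = i - 1 from by omega]
      · have hi1' : i = 1 := by omega
        rw [Finset.sum_eq_zero (fun p _ => if_neg (by omega))]
        rw [hi1']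
        simp [hC0]
  have h4 : (if i' = j' then (1 : Matrix (Fin m) (Fin m) ℂ) else 0)
      = if i = j then 1 else 0 := by
    by_cases hij : i = j
    · rw [if_pos (Fin.ext (by rw [hvi, hvj, hij])), if_pos hij]
    · rw [if_neg (fun h => hij (by have := congrArg Fin.val h; rw [hvi, hvj] at this; omega)),
        if_neg hij]
  rw [← h4, ← h2, h3]
  abel

set_option maxHeartbeats 1000000 in
theorem offdiag_blocks_of_inverse
    (n m : ℕ) (hn : 2 ≤ n) (hm : 1 ≤ m)
    (A B C : ℕ → Matrix (Fin m) (Fin m) ℂ)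
    (hC0 : C 0 = 0) (hBn : B n = 0)
    (hAinv : IsUnit (blockTridiag n m A B C))
    (hB : ∀ i, 1 ≤ i → i ≤ n - 1 → IsUnit (B i))
    (hC : ∀ i, 1 ≤ i → i ≤ n - 1 → IsUnit (C i))
    (hAi : ∀ i, 1 ≤ i → i ≤ n → IsUnit (A i))
    (hdom : ∀ i, 1 ≤ i → i ≤ n → ‖(A i)⁻¹ * C (i - 1)‖ + ‖(A i)⁻¹ * B i‖ ≤ 1)
    (hB1 : ‖(A 1)⁻¹ * B 1‖ < 1)
    (hCn : ‖(A n)⁻¹ * C (n - 1)‖ < 1)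
    (L T : ℕ → Matrix (Fin m) (Fin m) ℂ)
    (hL1 : L 1 = (A 1)⁻¹ * B 1) (hT1 : T 1 = (A 1)⁻¹ * B 1)
    (hT : ∀ i, 2 ≤ i → i ≤ n - 1 → T i = 1 - (A i)⁻¹ * C (i - 1) * L (i - 1))
    (hL : ∀ i, 2 ≤ i → i ≤ n - 1 → L i = (T i)⁻¹ * ((A i)⁻¹ * B i))
    (M W : ℕ → Matrix (Fin m) (Fin m) ℂ)
    (hMn : M n = (A n)⁻¹ * C (n - 1)) (hWn : W n = (A n)⁻¹ * C (n - 1))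
    (hW : ∀ i, 2 ≤ i → i ≤ n - 1 → W i = 1 - (A i)⁻¹ * B i * M (i + 1))
    (hM : ∀ i, 2 ≤ i → i ≤ n - 1 → M i = (W i)⁻¹ * ((A i)⁻¹ * C (i - 1)))
    (Z : ℕ → ℕ → Matrix (Fin m) (Fin m) ℂ)
    (hZ : ∀ i j : Fin n, Z ((i : ℕ) + 1) ((j : ℕ) + 1) =
      Matrix.of fun k l => (blockTridiag n m A B C)⁻¹ (i, k) (j, l)) :
    (∀ i, 2 ≤ i → i ≤ n → Z (i - 1) i = -(L (i - 1) * Z i i)) ∧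
    (∀ i, 1 ≤ i → i ≤ n - 1 → Z (i + 1) i = -(M (i + 1) * Z i i)) := by
  haveI : Nonempty (Fin m) := ⟨⟨0, hm⟩⟩
  have key := key_row n m hn A B C hC0 hBn hAinv Z hZ
  have hdetA : ∀ k, 1 ≤ k → k ≤ n → IsUnit (A k).det :=
    fun k h1 h2 => (Matrix.isUnit_iff_isUnit_det _).mp (hAi k h1 h2)
  -- superdiagonal side
  have SL : ∀ k, 1 ≤ k → k ≤ n - 1 →
      (‖L k‖ < 1 ∧ ∀ i, k + 1 ≤ i → i ≤ n → Z k i = -(L k * Z (k+1) i)) := by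
    intro k hk1
    induction k, hk1 using Nat.le_induction with
    | base =>
      intro _
      refine ⟨by rw [hL1]; exact hB1, ?_⟩
      intro i hi1 hi2
      have hkey := key 1 i (le_refl 1) (by omega) (by omega) hi2
      rw [if_neg (by omega)] at hkey
      norm_num at hkey
      rw [hC0, zero_mul, zero_add] at hkey
      have h5 : A 1 * Z 1 i = -(B 1 * Z 2 i) := eq_neg_of_add_eq_zero_left hkey
      rw [hL1]
      calc Z 1 i = (A 1)⁻¹ * (A 1 * Z 1 i) :=
            (Matrix.nonsing_inv_mul_cancel_left _ _ (hdetA 1 (by omega) (by omega))).symm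
        _ = -((A 1)⁻¹ * B 1 * Z (1+1) i) := by rw [h5]; simp [mul_assoc]
    | succ k hk ih =>
      intro hkn
      obtain ⟨ihL, ihZ⟩ := ih (by omega)
      have h2k : 2 ≤ k + 1 := by omega
      have hc1 : ‖(A (k+1))⁻¹ * C k‖ + ‖(A (k+1))⁻¹ * B (k+1)‖ ≤ 1 := by
        have := hdom (k+1) (by omega) (by omega)
        rwa [Nat.add_sub_cancel] at this
      have hc0 : (0:ℝ) ≤ ‖(A (k+1))⁻¹ * C k‖ := norm_nonneg _
      have hb0 : (0:ℝ) ≤ ‖(A (k+1))⁻¹ * B (k+1)‖ := norm_nonneg _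
      have hl0 : (0:ℝ) ≤ ‖L k‖ := norm_nonneg _
      have hXnorm : ‖(A (k+1))⁻¹ * C k * L k‖ < 1 :=
        lt_of_le_of_lt (norm_mul_le _ _) (by nlinarith)
      have hTu : IsUnit (T (k+1)) := by
        rw [hT (k+1) h2k hkn, Nat.add_sub_cancel]
        exact ⟨@Units.oneSub _ _ (let _ := (Matrix.linftyOpNormedSpace : NormedSpace ℂ (Matrix (Fin m) (Fin m) ℂ)); @instHasSummableGeomSeriesOfCompleteSpace _ _ (FiniteDimensional.complete ℂ _)) _ hXnorm, rfl⟩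
      have hTdet : IsUnit (T (k+1)).det := (Matrix.isUnit_iff_isUnit_det _).mp hTu
      have hLrec : L (k+1) = (A (k+1))⁻¹ * B (k+1) + (A (k+1))⁻¹ * C k * L k * L (k+1) := by
        have h6 : T (k+1) * L (k+1) = (A (k+1))⁻¹ * B (k+1) := by
          rw [hL (k+1) h2k hkn, Matrix.mul_nonsing_inv_cancel_left _ _ hTdet]
        rw [hT (k+1) h2k hkn, Nat.add_sub_cancel, sub_mul, one_mul] at h6
        exact eq_add_of_sub_eq h6
      have hcpos : 0 < ‖(A (k+1))⁻¹ * C k‖ := by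
        refine norm_pos_iff.mpr ?_
        exact (((Matrix.isUnit_nonsing_inv_iff).mpr (hAi (k+1) (by omega) (by omega))).mul
          (hC k (by omega) (by omega))).ne_zero
      have hbpos : 0 < ‖(A (k+1))⁻¹ * B (k+1)‖ := by
        refine norm_pos_iff.mpr ?_
        exact (((Matrix.isUnit_nonsing_inv_iff).mpr (hAi (k+1) (by omega) (by omega))).mul
          (hB (k+1) (by omega) hkn)).ne_zero
      have hLbound : ‖L (k+1)‖ ≤ ‖(A (k+1))⁻¹ * B (k+1)‖
          + (‖(A (k+1))⁻¹ * C k‖ * ‖L k‖) * ‖L (k+1)‖ := by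
        calc ‖L (k+1)‖ ≤ ‖(A (k+1))⁻¹ * B (k+1)‖ + ‖(A (k+1))⁻¹ * C k * L k * L (k+1)‖ := by
              nth_rewrite 1 [hLrec]; exact norm_add_le _ _
          _ ≤ ‖(A (k+1))⁻¹ * B (k+1)‖ + (‖(A (k+1))⁻¹ * C k‖ * ‖L k‖) * ‖L (k+1)‖ := by
              refine add_le_add_right ?_ _
              exact (norm_mul_le _ _).trans
                (mul_le_mul_of_nonneg_right (norm_mul_le _ _) (norm_nonneg _))
      have h7 : ‖(A (k+1))⁻¹ * C k‖ * ‖L k‖ < ‖(A (k+1))⁻¹ * C k‖ :=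
        mul_lt_of_lt_one_right hcpos ihL
      have h8 : ‖L (k+1)‖ * (1 - ‖(A (k+1))⁻¹ * C k‖ * ‖L k‖)
          ≤ ‖(A (k+1))⁻¹ * B (k+1)‖ := by nlinarith [hLbound]
      have hLnorm : ‖L (k+1)‖ < 1 := by
        by_contra hge
        push_neg at hge
        have h9 : (1:ℝ) - ‖(A (k+1))⁻¹ * C k‖ * ‖L k‖
            ≤ ‖L (k+1)‖ * (1 - ‖(A (k+1))⁻¹ * C k‖ * ‖L k‖) :=
          le_mul_of_one_le_left (by linarith) hge
        linarith
      refine ⟨hLnorm, ?_⟩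
      intro i hi1 hi2
      have hkey := key (k+1) i (by omega) (by omega) (by omega) hi2
      rw [if_neg (by omega), Nat.add_sub_cancel] at hkey
      have hik := ihZ i (by omega) hi2
      have hAdet := hdetA (k+1) (by omega) (by omega)
      have h2' : (A (k+1))⁻¹ * (C k * Z k i) + Z (k+1) i
          + (A (k+1))⁻¹ * (B (k+1) * Z (k+2) i) = 0 := by
        have h := congrArg (fun X => (A (k+1))⁻¹ * X) hkey
        simp only [mul_add, mul_zero] at h
        rwa [Matrix.nonsing_inv_mul_cancel_left _ _ hAdet] at h
      have hLk : L k * Z (k+1) i = -(Z k i) := by rw [hik, neg_neg]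
      have hTZ : T (k+1) * Z (k+1) i = -((A (k+1))⁻¹ * (B (k+1) * Z (k+2) i)) := by
        rw [hT (k+1) h2k hkn, Nat.add_sub_cancel]
        calc (1 - (A (k+1))⁻¹ * C k * L k) * Z (k+1) i
            = Z (k+1) i - (A (k+1))⁻¹ * (C k * (L k * Z (k+1) i)) := by
              rw [sub_mul, one_mul, mul_assoc, mul_assoc]
          _ = Z (k+1) i + (A (k+1))⁻¹ * (C k * Z k i) := by
              rw [hLk, mul_neg, mul_neg, sub_neg_eq_add]
          _ = -((A (k+1))⁻¹ * (B (k+1) * Z (k+2) i)) := by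
              apply eq_neg_of_add_eq_zero_left
              rw [← h2']; abel
      rw [hL (k+1) h2k hkn]
      calc Z (k+1) i = (T (k+1))⁻¹ * (T (k+1) * Z (k+1) i) :=
            (Matrix.nonsing_inv_mul_cancel_left _ _ hTdet).symm
        _ = -((T (k+1))⁻¹ * ((A (k+1))⁻¹ * B (k+1)) * Z (k+1+1) i) := by
            rw [hTZ]; simp [mul_assoc]
  -- subdiagonal side
  have SM : ∀ d : ℕ, ∀ k, k = n - d → 2 ≤ k →
      (‖M k‖ < 1 ∧ ∀ i, 1 ≤ i → i ≤ k - 1 → Z k i = -(M k * Z (k-1) i)) := by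
    intro d
    induction d with
    | zero =>
      intro k hk h2
      have hkn : k = n := by omega
      subst hkn
      refine ⟨by rw [hMn]; exact hCn, ?_⟩
      intro i hi1 hi2
      have hkey := key k i (by omega) (by omega) hi1 (by omega)
      rw [if_neg (by omega), hBn, zero_mul, add_zero] at hkey
      have h5 : A k * Z k i = -(C (k-1) * Z (k-1) i) := eq_neg_of_add_eq_zero_right hkey
      rw [hMn]
      calc Z k i = (A k)⁻¹ * (A k * Z k i) :=
            (Matrix.nonsing_inv_mul_cancel_left _ _ (hdetA k (by omega) (by omega))).symm
        _ = -((A k)⁻¹ * C (k-1) * Z (k-1) i) := by rw [h5]; simp [mul_assoc]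
    | succ d ih =>
      intro k hk h2
      have hklt : k < n := by omega
      have hkn1 : k ≤ n - 1 := by omega
      obtain ⟨ihM, ihZ⟩ := ih (k+1) (by omega) (by omega)
      have hc1 : ‖(A k)⁻¹ * C (k-1)‖ + ‖(A k)⁻¹ * B k‖ ≤ 1 := hdom k (by omega) (by omega)
      have hc0 : (0:ℝ) ≤ ‖(A k)⁻¹ * C (k-1)‖ := norm_nonneg _
      have hb0 : (0:ℝ) ≤ ‖(A k)⁻¹ * B k‖ := norm_nonneg _
      have hm0 : (0:ℝ) ≤ ‖M (k+1)‖ := norm_nonneg _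
      have hXnorm : ‖(A k)⁻¹ * B k * M (k+1)‖ < 1 :=
        lt_of_le_of_lt (norm_mul_le _ _) (by nlinarith)
      have hWu : IsUnit (W k) := by
        rw [hW k h2 hkn1]
        exact ⟨@Units.oneSub _ _ (let _ := (Matrix.linftyOpNormedSpace : NormedSpace ℂ (Matrix (Fin m) (Fin m) ℂ)); @instHasSummableGeomSeriesOfCompleteSpace _ _ (FiniteDimensional.complete ℂ _)) _ hXnorm, rfl⟩
      have hWdet : IsUnit (W k).det := (Matrix.isUnit_iff_isUnit_det _).mp hWu
      have hMrec : M k = (A k)⁻¹ * C (k-1) + (A k)⁻¹ * B k * M (k+1) * M k := by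
        have h6 : W k * M k = (A k)⁻¹ * C (k-1) := by
          rw [hM k h2 hkn1, Matrix.mul_nonsing_inv_cancel_left _ _ hWdet]
        rw [hW k h2 hkn1, sub_mul, one_mul] at h6
        exact eq_add_of_sub_eq h6
      have hcpos : 0 < ‖(A k)⁻¹ * C (k-1)‖ := by
        refine norm_pos_iff.mpr ?_
        exact (((Matrix.isUnit_nonsing_inv_iff).mpr (hAi k (by omega) (by omega))).mul
          (hC (k-1) (by omega) (by omega))).ne_zero
      have hbpos : 0 < ‖(A k)⁻¹ * B k‖ := by
        refine norm_pos_iff.mpr ?_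
        exact (((Matrix.isUnit_nonsing_inv_iff).mpr (hAi k (by omega) (by omega))).mul
          (hB k (by omega) hkn1)).ne_zero
      have hMbound : ‖M k‖ ≤ ‖(A k)⁻¹ * C (k-1)‖
          + (‖(A k)⁻¹ * B k‖ * ‖M (k+1)‖) * ‖M k‖ := by
        calc ‖M k‖ ≤ ‖(A k)⁻¹ * C (k-1)‖ + ‖(A k)⁻¹ * B k * M (k+1) * M k‖ := by
              nth_rewrite 1 [hMrec]; exact norm_add_le _ _
          _ ≤ ‖(A k)⁻¹ * C (k-1)‖ + (‖(A k)⁻¹ * B k‖ * ‖M (k+1)‖) * ‖M k‖ := by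
              refine add_le_add_right ?_ _
              exact (norm_mul_le _ _).trans
                (mul_le_mul_of_nonneg_right (norm_mul_le _ _) (norm_nonneg _))
      have h7 : ‖(A k)⁻¹ * B k‖ * ‖M (k+1)‖ < ‖(A k)⁻¹ * B k‖ :=
        mul_lt_of_lt_one_right hbpos ihM
      have h8 : ‖M k‖ * (1 - ‖(A k)⁻¹ * B k‖ * ‖M (k+1)‖)
          ≤ ‖(A k)⁻¹ * C (k-1)‖ := by nlinarith [hMbound]
      have hMnorm : ‖M k‖ < 1 := by
        by_contra hge
        push_neg at hge
        have h9 : (1:ℝ) - ‖(A k)⁻¹ * B k‖ * ‖M (k+1)‖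
            ≤ ‖M k‖ * (1 - ‖(A k)⁻¹ * B k‖ * ‖M (k+1)‖) :=
          le_mul_of_one_le_left (by linarith) hge
        linarith
      refine ⟨hMnorm, ?_⟩
      intro i hi1 hi2
      have hkey := key k i (by omega) (by omega) hi1 (by omega)
      rw [if_neg (by omega)] at hkey
      have hik := ihZ i hi1 (by omega)
      rw [Nat.add_sub_cancel] at hik
      have hAdet := hdetA k (by omega) (by omega)
      have h2' : (A k)⁻¹ * (C (k-1) * Z (k-1) i) + Z k i
          + (A k)⁻¹ * (B k * Z (k+1) i) = 0 := by
        have h := congrArg (fun X => (A k)⁻¹ * X) hkey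
        simp only [mul_add, mul_zero] at h
        rwa [Matrix.nonsing_inv_mul_cancel_left _ _ hAdet] at h
      have hMk : M (k+1) * Z k i = -(Z (k+1) i) := by rw [hik, neg_neg]
      have hWZ : W k * Z k i = -((A k)⁻¹ * (C (k-1) * Z (k-1) i)) := by
        rw [hW k h2 hkn1]
        calc (1 - (A k)⁻¹ * B k * M (k+1)) * Z k i
            = Z k i - (A k)⁻¹ * (B k * (M (k+1) * Z k i)) := by
              rw [sub_mul, one_mul, mul_assoc, mul_assoc]
          _ = Z k i + (A k)⁻¹ * (B k * Z (k+1) i) := by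
              rw [hMk, mul_neg, mul_neg, sub_neg_eq_add]
          _ = -((A k)⁻¹ * (C (k-1) * Z (k-1) i)) := by
              apply eq_neg_of_add_eq_zero_left
              rw [← h2']; abel
      rw [hM k h2 hkn1]
      calc Z k i = (W k)⁻¹ * (W k * Z k i) :=
            (Matrix.nonsing_inv_mul_cancel_left _ _ hWdet).symm
        _ = -((W k)⁻¹ * ((A k)⁻¹ * C (k-1)) * Z (k-1) i) := by
            rw [hWZ]; simp [mul_assoc]
  constructor
  · intro i h2i hin
    have h := (SL (i-1) (by omega) (by omega)).2 i (by omega) hin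
    rwa [show i - 1 + 1 = i from by omega] at h
  · intro i h1i hin1
    have h := (SM (n - (i+1)) (i+1) (by omega) (by omega)).2 i h1i (by omega)
    rwa [show i + 1 - 1 = i from by omega] at h
end

section
/- Under the standing assumptions, for each t = 1,…,n−1, the blocks Z_{ij} of the inverse A⁻¹ satisfy ‖Z_{ij}‖ ≤ ‖Z_{jj}‖ · ∏_{k=j+1}^{i} ω_{k,t} for all i > j. -/
open scoped Matrix
attribute [local instance] Matrix.linftyOpNormedRing

set_option maxHeartbeats 2000000 in
theorem offdiag_bound_lower_triangle_iter
    (n m : ℕ) (hn : 2 ≤ n) (hm : 1 ≤ m)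
    (A B C : ℕ → Matrix (Fin m) (Fin m) ℂ)
    (hC0 : C 0 = 0) (hBn : B n = 0)
    (hAinv : IsUnit (blockTridiag n m A B C))
    (hB : ∀ i, 1 ≤ i → i ≤ n - 1 → IsUnit (B i))
    (hC : ∀ i, 1 ≤ i → i ≤ n - 1 → IsUnit (C i))
    (hAi : ∀ i, 1 ≤ i → i ≤ n → IsUnit (A i))
    (hdom : ∀ i, 1 ≤ i → i ≤ n → ‖(A i)⁻¹ * C (i - 1)‖ + ‖(A i)⁻¹ * B i‖ ≤ 1)
    (hB1 : ‖(A 1)⁻¹ * B 1‖ < 1)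
    (hCn : ‖(A n)⁻¹ * C (n - 1)‖ < 1)
    (ω : ℕ → ℝ)
    (hω : ∀ i, 1 ≤ i → i ≤ n → ω i = ‖(A i)⁻¹ * C (i - 1)‖ / (1 - ‖(A i)⁻¹ * B i‖))
    (ω' : ℕ → ℕ → ℝ)
    (hω'1 : ∀ i, ω' i 1 = ω i)
    (hω'n : ∀ t, ω' (n + 1) t = 0)
    (hω'a : ∀ i t, 1 ≤ i → i ≤ n → 2 ≤ t → t ≤ n - 1 → n - t + 1 < i → ω' i t = ω' i (t - 1))
    (hω'b : ∀ i t, 1 ≤ i → i ≤ n → 2 ≤ t → t ≤ n - 1 → i ≤ n - t + 1 →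
      ω' i t = ‖(A i)⁻¹ * C (i - 1)‖ / (1 - ‖(A i)⁻¹ * B i‖ * ω' (i + 1) (t - 1)))
    (Z : ℕ → ℕ → Matrix (Fin m) (Fin m) ℂ)
    (hZ : ∀ i j : Fin n, Z ((i : ℕ) + 1) ((j : ℕ) + 1) =
      Matrix.of fun k l => (blockTridiag n m A B C)⁻¹ (i, k) (j, l)) :
    ∀ t, 1 ≤ t → t ≤ n - 1 → ∀ i j, 1 ≤ j → j < i → i ≤ n →
      ‖Z i j‖ ≤ ‖Z j j‖ * ∏ k ∈ Finset.Icc (j + 1) i, ω' k t := by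
  haveI : Nonempty (Fin m) := ⟨⟨0, hm⟩⟩
  -- ## Step 1: the block recurrence from A * A⁻¹ = 1
  have key : ∀ i j, 1 ≤ j → j < i → i ≤ n →
      C (i-1) * Z (i-1) j + A i * Z i j + (if i < n then B i * Z (i+1) j else 0) = 0 := by
    set M := blockTridiag n m A B C with hMdef
    have hdet : IsUnit M.det := (Matrix.isUnit_iff_isUnit_det M).mp hAinv
    have hMinv : M * M⁻¹ = 1 := Matrix.mul_nonsing_inv M hdet
    set e := Matrix.compRingEquiv (Fin n) (Fin m) ℂ with hedef
    set N := e.symm M with hNdef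
    set N' := e.symm M⁻¹ with hN'def
    have hNmul : N * N' = 1 := by
      rw [hNdef, hN'def, ← map_mul, hMinv, map_one]
    have hNval : ∀ i0 p : Fin n, N i0 p =
        if i0 = p then A ((i0:ℕ)+1) else if (i0:ℕ)+1 = (p:ℕ) then B ((i0:ℕ)+1)
        else if (p:ℕ)+1 = (i0:ℕ) then C ((p:ℕ)+1) else 0 := by
      intro i0 p
      ext k l
      show M (i0, k) (p, l) = _
      rw [hMdef]
      simp only [blockTridiag, Matrix.of_apply]
      split_ifs <;> simp
    intro i j hj hji hin
    obtain ⟨a, rfl⟩ : ∃ a, i = a + 2 := ⟨i - 2, by omega⟩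
    obtain ⟨b0, rfl⟩ : ∃ b0, j = b0 + 1 := ⟨j - 1, by omega⟩
    have hb0a : b0 ≤ a := by omega
    have han : a + 2 ≤ n := hin
    set i0 : Fin n := ⟨a + 1, by omega⟩ with hi0def
    set j0 : Fin n := ⟨b0, by omega⟩ with hj0def
    have hne : i0 ≠ j0 := by
      simp only [hi0def, hj0def, Ne, Fin.mk.injEq]
      omega
    have h0 : ∑ p : Fin n, N i0 p * N' p j0 = 0 := by
      have h1 : (N * N') i0 j0 = (1 : Matrix (Fin n) (Fin n) (Matrix (Fin m) (Fin m) ℂ)) i0 j0 := by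
        rw [hNmul]
      rw [Matrix.mul_apply, Matrix.one_apply_ne hne] at h1
      exact h1
    have hZ' : ∀ p : Fin n, N' p j0 = Z ((p:ℕ)+1) (b0+1) := by
      intro p
      rw [hZ p j0]
      rfl
    set f : ℕ → Matrix (Fin m) (Fin m) ℂ := fun p =>
      (if p = a then C (a+1) * Z (a+1) (b0+1) else 0)
      + (if p = a+1 then A (a+2) * Z (a+2) (b0+1) else 0)
      + (if p = a+2 then B (a+2) * Z (a+3) (b0+1) else 0) with hfdef
    have hfp : ∀ p : Fin n, N i0 p * N' p j0 = f (p : ℕ) := by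
      intro p
      rw [hNval i0 p, hZ' p, hfdef]
      simp only [hi0def, Fin.ext_iff]
      by_cases h1 : (p:ℕ) = a+1
      · simp [h1]
      · by_cases h2 : (p:ℕ) = a+2
        · simp [h1, h2, show ¬(a+1+1 = a+1) by omega, show ¬(a+2+1=a+1) by omega]
        · by_cases h3 : (p:ℕ) = a
          · simp [h1, h2, h3, show ¬(a+1 = a) by omega, show ¬(a+1+1 = a) by omega]
          · simp [h1, h2, h3, show ¬((p:ℕ)+1 = a+1) by omega, show ¬(a+1+1 = (p:ℕ)) by omega,
              show ¬((a:ℕ)+1 = p) by omega]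
    rw [Finset.sum_congr rfl (fun p _ => hfp p)] at h0
    rw [Fin.sum_univ_eq_sum_range f n] at h0
    rw [hfdef] at h0
    simp only [Finset.sum_add_distrib, Finset.sum_ite_eq' (Finset.range n), Finset.mem_range] at h0
    rw [if_pos (by omega : a < n), if_pos (by omega : a + 1 < n)] at h0
    simpa [show a+2-1 = a+1 from rfl] using h0
  -- ## Step 2: the norm recurrence
  have normRel : ∀ i j, 1 ≤ j → j < i → i ≤ n →
      ‖Z i j‖ ≤ ‖(A i)⁻¹ * C (i-1)‖ * ‖Z (i-1) j‖ + ‖(A i)⁻¹ * B i‖ * ‖Z (i+1) j‖ := by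
    intro i j hj hji hin
    have hAd : IsUnit (A i).det := (Matrix.isUnit_iff_isUnit_det _).mp (hAi i (by omega) hin)
    have hk := key i j hj hji hin
    have h2 : A i * Z i j
        = -(C (i-1) * Z (i-1) j + (if i < n then B i * Z (i+1) j else 0)) := by
      have h3 : (C (i-1) * Z (i-1) j + (if i < n then B i * Z (i+1) j else 0))
          + A i * Z i j = 0 := by
        have hre : (C (i-1) * Z (i-1) j + (if i < n then B i * Z (i+1) j else 0))
            + A i * Z i j
            = C (i-1) * Z (i-1) j + A i * Z i j + (if i < n then B i * Z (i+1) j else 0) := by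
          abel
        rw [hre]
        exact hk
      exact eq_neg_of_add_eq_zero_right h3
    have hzz : Z i j = -((A i)⁻¹ * C (i-1) * Z (i-1) j
        + (A i)⁻¹ * (if i < n then B i * Z (i+1) j else 0)) := by
      have hid : (A i)⁻¹ * (A i * Z i j) = Z i j :=
        Matrix.nonsing_inv_mul_cancel_left _ _ hAd
      rw [← hid, h2, mul_neg, mul_add, ← Matrix.mul_assoc]
    have hnorm : ‖Z i j‖ = ‖(A i)⁻¹ * C (i-1) * Z (i-1) j
        + (A i)⁻¹ * (if i < n then B i * Z (i+1) j else 0)‖ := by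
      rw [hzz, norm_neg]
    rw [hnorm]
    refine le_trans (norm_add_le _ _) (add_le_add (norm_mul_le _ _) ?_)
    by_cases hilt : i < n
    · rw [if_pos hilt, ← Matrix.mul_assoc]
      exact norm_mul_le _ _
    · rw [if_neg hilt, mul_zero, norm_zero]
      positivity
  -- ## Step 3: numeric facts
  have hb1lt : ∀ i, 1 ≤ i → i ≤ n → ‖(A i)⁻¹ * B i‖ < 1 := by
    intro i h1 h2
    rcases eq_or_lt_of_le h1 with h | h
    · rw [← h]; exact hB1
    · -- 2 ≤ i : then C (i-1) is a unit, so c i > 0 and c i + b i ≤ 1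
      have hAd : IsUnit (A i).det := (Matrix.isUnit_iff_isUnit_det _).mp (hAi i (by omega) h2)
      have hu1 : IsUnit ((A i)⁻¹) :=
        ⟨⟨(A i)⁻¹, A i, Matrix.nonsing_inv_mul _ hAd, Matrix.mul_nonsing_inv _ hAd⟩, rfl⟩
      have hu2 : IsUnit ((A i)⁻¹ * C (i-1)) := hu1.mul (hC (i-1) (by omega) (by omega))
      have hcpos : 0 < ‖(A i)⁻¹ * C (i-1)‖ := norm_pos_iff.mpr hu2.ne_zero
      have := hdom i (by omega) h2
      linarith
  have hb0 : ∀ i, 0 ≤ ‖(A i)⁻¹ * B i‖ := fun i => norm_nonneg _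
  have hc0 : ∀ i, 0 ≤ ‖(A i)⁻¹ * C (i-1)‖ := fun i => norm_nonneg _
  have hbn0 : ‖(A n)⁻¹ * B n‖ = 0 := by rw [hBn, mul_zero, norm_zero]
  -- ## Step 4: the main induction on t
  have hP : ∀ t, 1 ≤ t → t ≤ n - 1 →
      (∀ i, 1 ≤ i → i ≤ n → 0 ≤ ω' i t ∧ ω' i t ≤ 1) ∧
      (∀ i j, 1 ≤ j → j < i → i ≤ n → ‖Z i j‖ ≤ ω' i t * ‖Z (i-1) j‖) := by
    intro t
    induction t using Nat.strong_induction_on with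
    | _ t IH =>
      intro ht1 htn
      rcases eq_or_lt_of_le ht1 with h | h
      · -- t = 1
        subst h
        have hbound1 : ∀ i, 1 ≤ i → i ≤ n → 0 ≤ ω' i 1 ∧ ω' i 1 ≤ 1 := by
          intro i h1 h2
          rw [hω'1, hω i h1 h2]
          have hblt := hb1lt i h1 h2
          have hdomi := hdom i h1 h2
          constructor
          · exact div_nonneg (hc0 i) (by linarith)
          · rw [div_le_one (by linarith)]
            linarith
        refine ⟨hbound1, ?_⟩
        have hcasen : ∀ j, 1 ≤ j → j < n → ‖Z n j‖ ≤ ω' n 1 * ‖Z (n-1) j‖ := by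
          intro j hj hjn
          have h := normRel n j hj hjn le_rfl
          rw [hbn0, zero_mul, add_zero] at h
          rw [hω'1, hω n (by omega) le_rfl, hbn0, sub_zero, div_one]
          exact h
        have hdown : ∀ d i j, 1 ≤ j → j < i → i ≤ n → n - i ≤ d →
            ‖Z i j‖ ≤ ω' i 1 * ‖Z (i-1) j‖ := by
          intro d
          induction d with
          | zero =>
            intro i j hj hji hin hd
            have : i = n := by omega
            subst this
            exact hcasen j hj hji
          | succ d IHd =>
            intro i j hj hji hin hd
            by_cases hieq : i = n
            · subst hieq; exact hcasen j hj hji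
            · have hiltn : i < n := by omega
              have hnext := IHd (i+1) j hj (by omega) (by omega) (by omega)
              rw [show i + 1 - 1 = i from rfl] at hnext
              have h := normRel i j hj hji hin
              have hw := hbound1 (i+1) (by omega) (by omega)
              have hblt := hb1lt i (by omega) hin
              have hdomi := hdom i (by omega) hin
              rw [hω'1, hω i (by omega) hin]
              rw [div_mul_eq_mul_div, le_div_iff₀ (by linarith)]
              nlinarith [mul_le_mul_of_nonneg_left hnext (hb0 i),
                mul_nonneg (norm_nonneg (Z i j)) (mul_nonneg (hb0 i) (sub_nonneg.mpr hw.2)),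
                norm_nonneg (Z i j), norm_nonneg (Z (i+1) j)]
        exact fun i j hj hji hin => hdown (n - i) i j hj hji hin le_rfl
      · -- 2 ≤ t
        obtain ⟨s, rfl⟩ : ∃ s, t = s + 1 := ⟨t - 1, by omega⟩
        have hs1 : 1 ≤ s := by omega
        have IHs := IH s (by omega) hs1 (by omega)
        have hboundt : ∀ i, 1 ≤ i → i ≤ n → 0 ≤ ω' i (s+1) ∧ ω' i (s+1) ≤ 1 := by
          intro i h1 h2
          by_cases hcase : i ≤ n - (s+1) + 1
          · rw [hω'b i (s+1) h1 h2 (by omega) htn hcase, Nat.add_sub_cancel]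
            have hi1n : i + 1 ≤ n := by omega
            have hw := IHs.1 (i+1) (by omega) hi1n
            have hblt := hb1lt i h1 h2
            have hdomi := hdom i h1 h2
            have hbw : ‖(A i)⁻¹ * B i‖ * ω' (i+1) s ≤ ‖(A i)⁻¹ * B i‖ :=
              mul_le_of_le_one_right (hb0 i) hw.2
            have hbw0 : 0 ≤ ‖(A i)⁻¹ * B i‖ * ω' (i+1) s := mul_nonneg (hb0 i) hw.1
            constructor
            · exact div_nonneg (hc0 i) (by linarith)
            · rw [div_le_one (by linarith)]
              linarith
          · rw [hω'a i (s+1) h1 h2 (by omega) htn (by omega), Nat.add_sub_cancel]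
            exact IHs.1 i h1 h2
        refine ⟨hboundt, ?_⟩
        intro i j hj hji hin
        by_cases hcase : i ≤ n - (s+1) + 1
        · have hi1n : i + 1 ≤ n := by omega
          have hnext := IHs.2 (i+1) j hj (by omega) hi1n
          rw [show i + 1 - 1 = i from rfl] at hnext
          have h := normRel i j hj hji hin
          have hw := IHs.1 (i+1) (by omega) hi1n
          have hblt := hb1lt i (by omega) hin
          have hdomi := hdom i (by omega) hin
          have hbw : ‖(A i)⁻¹ * B i‖ * ω' (i+1) s ≤ ‖(A i)⁻¹ * B i‖ :=
            mul_le_of_le_one_right (hb0 i) hw.2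
          rw [hω'b i (s+1) (by omega) hin (by omega) htn hcase, Nat.add_sub_cancel]
          rw [div_mul_eq_mul_div, le_div_iff₀ (by linarith)]
          nlinarith [mul_le_mul_of_nonneg_left hnext (hb0 i),
            norm_nonneg (Z i j), norm_nonneg (Z (i+1) j)]
        · rw [hω'a i (s+1) (by omega) hin (by omega) htn (by omega), Nat.add_sub_cancel]
          exact IHs.2 i j hj hji hin
  -- ## Step 5: telescoping
  intro t ht1 htn i j hj hji hin
  have hPt := hP t ht1 htn
  have htel : ∀ i, j + 1 ≤ i → i ≤ n →
      ‖Z i j‖ ≤ ‖Z j j‖ * ∏ k ∈ Finset.Icc (j + 1) i, ω' k t := by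
    intro i hi
    induction i, hi using Nat.le_induction with
    | base =>
      intro hin'
      rw [Finset.Icc_self, Finset.prod_singleton]
      have h := hPt.2 (j+1) j hj (by omega) hin'
      rw [show j + 1 - 1 = j from rfl] at h
      rw [mul_comm]
      exact h
    | succ i hi IH2 =>
      intro hin'
      have hZi := IH2 (by omega)
      have hstep := hPt.2 (i+1) j hj (by omega) hin'
      rw [show i + 1 - 1 = i from rfl] at hstep
      have hw := (hPt.1 (i+1) (by omega) hin').1
      rw [Finset.prod_Icc_succ_top (by omega : j + 1 ≤ i + 1)]
      calc ‖Z (i+1) j‖ ≤ ω' (i+1) t * ‖Z i j‖ := hstep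
        _ ≤ ω' (i+1) t * (‖Z j j‖ * ∏ k ∈ Finset.Icc (j + 1) i, ω' k t) :=
            mul_le_mul_of_nonneg_left hZi hw
        _ = ‖Z j j‖ * ((∏ k ∈ Finset.Icc (j + 1) i, ω' k t) * ω' (i+1) t) := by ring
  exact htel i (by omega) hin
end
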